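/- arXiv:2112.03107 — 9 statements merged into one kernel-verified Lean document; each statement's English description precedes it below -/
import Mathlib

section
/- For any tree T with at least two vertices, there exists a neo-colonization of minimum total weight in which every part has size at least two. -/
open scoped Classical

namespace ED

variable {V : Type}

/-- `D` is a dominating set of `G`. -/
def IsDomSet (G : SimpleGraph V) (D : Set V) : Prop :=
  ∀ v, v ∉ D → ∃ u ∈ D, G.Adj u v

/-- The domination number. -/
noncomputable def domNum (G : SimpleGraph V) : ℕ :=
  sInf {n | ∃ D : Set V, IsDomSet G D ∧ D.ncard = n}

/-- The connected domination number. -/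
noncomputable def connDomNum (G : SimpleGraph V) : ℕ :=
  sInf {n | ∃ D : Set V, IsDomSet G D ∧ (G.induce D).Connected ∧ D.ncard = n}

/-- The weight of a part of a neo-colonization. -/
noncomputable def partWeight (G : SimpleGraph V) (S : Set V) : ℕ :=
  if G.IsClique S then 1 else 1 + connDomNum (G.induce S)

/-- `P` is a neo-colonization of `G`: a partition of the vertex set into parts
inducing connected subgraphs. -/
def IsNeoColonization (G : SimpleGraph V) (P : Finset (Set V)) : Prop :=
  (∀ S ∈ P, (G.induce S).Connected) ∧ (∀ v : V, ∃! S, S ∈ P ∧ v ∈ S)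

/-- The total weight of a neo-colonization. -/
noncomputable def neoWeight (G : SimpleGraph V) (P : Finset (Set V)) : ℕ :=
  ∑ S ∈ P, partWeight G S

/-- The clique-connected cover number: minimum weight of a neo-colonization. -/
noncomputable def thetaC (G : SimpleGraph V) : ℕ :=
  sInf {w | ∃ P : Finset (Set V), IsNeoColonization G P ∧ neoWeight G P = w}

/-- `k` guards can defend `G` in the all-guards-move eternal domination game:
there is a nonempty family of dominating configurations of size `k`, closed under
responding to attacks, where every guard may move to an adjacent vertex and the
attacked vertex becomes occupied. -/
def CanDefendAllMove (G : SimpleGraph V) (k : ℕ) : Prop :=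
  ∃ F : Set (Set V), F.Nonempty ∧ (∀ D ∈ F, IsDomSet G D ∧ D.ncard = k) ∧
    ∀ D ∈ F, ∀ r ∉ D, ∃ D' ∈ F, r ∈ D' ∧
      ∃ f : V → V, Set.BijOn f D D' ∧ ∀ v ∈ D, f v = v ∨ G.Adj v (f v)

/-- The m-eternal domination number. -/
noncomputable def mEternalDomNum (G : SimpleGraph V) : ℕ :=
  sInf {k | CanDefendAllMove G k}

/-- `k` guards can defend `G` in the one-guard-moves eternal domination game. -/
def CanDefendOneMove (G : SimpleGraph V) (k : ℕ) : Prop :=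
  ∃ F : Set (Set V), F.Nonempty ∧ (∀ D ∈ F, IsDomSet G D ∧ D.ncard = k) ∧
    ∀ D ∈ F, ∀ r ∉ D, ∃ v ∈ D, G.Adj v r ∧ insert r (D \ {v}) ∈ F

/-- The eternal domination number. -/
noncomputable def eternalDomNum (G : SimpleGraph V) : ℕ :=
  sInf {k | CanDefendOneMove G k}

/-- The independence number. -/
noncomputable def indepNum (G : SimpleGraph V) : ℕ :=
  sSup {n | ∃ S : Set V, S.Pairwise (fun u v => ¬ G.Adj u v) ∧ S.ncard = n}

/-- A leaf: a vertex of degree one. -/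
def IsLeaf (G : SimpleGraph V) (v : V) : Prop := (G.neighborSet v).ncard = 1

/-- A stem: a vertex of degree at least two adjacent to a leaf. -/
def IsStem (G : SimpleGraph V) (s : V) : Prop :=
  2 ≤ (G.neighborSet s).ncard ∧ ∃ v, G.Adj s v ∧ IsLeaf G v

/-- A loner: an internal vertex adjacent to no leaf. -/
def IsLoner (G : SimpleGraph V) (v : V) : Prop :=
  ¬ IsLeaf G v ∧ ∀ u, G.Adj v u → ¬ IsLeaf G u

/-- A weak stem: a stem adjacent to exactly one leaf. -/
def IsWeakStem (G : SimpleGraph V) (s : V) : Prop :=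
  IsStem G s ∧ {v | G.Adj s v ∧ IsLeaf G v}.ncard = 1

/-- An exposed stem: a stem with at most one internal (non-leaf) neighbor. -/
def IsExposedStem (G : SimpleGraph V) (s : V) : Prop :=
  IsStem G s ∧ {v | G.Adj s v ∧ ¬ IsLeaf G v}.ncard ≤ 1

/-- `G` is a star: some center is adjacent to all other vertices and
every edge is incident to the center. -/
def IsStarGraph (G : SimpleGraph V) : Prop :=
  ∃ c, (∀ v, v ≠ c → G.Adj c v) ∧ ∀ u v, G.Adj u v → u = c ∨ v = c

end ED

section NeoAux

open ED SimpleGraph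

variable {V : Type}

private lemma connected_induce_singleton (G : SimpleGraph V) (u : V) :
    (G.induce {u}).Connected := by
  rw [SimpleGraph.connected_iff_exists_forall_reachable]
  refine ⟨⟨u, rfl⟩, fun w => ?_⟩
  have : w = ⟨u, rfl⟩ := Subtype.ext w.2
  rw [this]

private lemma connected_insert (G : SimpleGraph V) {S : Set V} (hS : (G.induce S).Connected)
    {u v : V} (hu : u ∈ S) (hadj : G.Adj u v) :
    (G.induce (insert v S)).Connected := by
  rw [SimpleGraph.connected_iff_exists_forall_reachable]
  refine ⟨⟨u, Set.mem_insert_of_mem _ hu⟩, ?_⟩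
  rintro ⟨w, hw⟩
  rcases hw with rfl | hw
  · exact SimpleGraph.Adj.reachable (by simpa using hadj)
  · have h := hS.preconnected ⟨u, hu⟩ ⟨w, hw⟩
    exact h.map (SimpleGraph.induceHomOfLE G (Set.subset_insert v S)).toHom

private noncomputable def doubleInduceIso (G : SimpleGraph V) (S : Set V) (D : Set ↥S) :
    (G.induce S).induce D ≃g G.induce (Subtype.val '' D) where
  toEquiv := Equiv.Set.image Subtype.val D Subtype.val_injective
  map_rel_iff' := Iff.rfl

private lemma connDomNum_le (G : SimpleGraph V) {S C : Set V} (hCS : C ⊆ S)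
    (hdom : ∀ x ∈ S, x ∉ C → ∃ y ∈ C, G.Adj y x)
    (hconn : (G.induce C).Connected) :
    connDomNum (G.induce S) ≤ C.ncard := by
  have himg : Subtype.val '' {x : ↥S | ↑x ∈ C} = C := by
    ext x
    constructor
    · rintro ⟨y, hy, rfl⟩; exact hy
    · intro hx; exact ⟨⟨x, hCS hx⟩, hx, rfl⟩
  apply Nat.sInf_le
  refine ⟨{x : ↥S | ↑x ∈ C}, ?_, ?_, ?_⟩
  · rintro ⟨x, hx⟩ hxC
    obtain ⟨y, hyC, hadj⟩ := hdom x hx hxC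
    exact ⟨⟨y, hCS hyC⟩, hyC, hadj⟩
  · exact (doubleInduceIso G S _).connected_iff.mpr (by rw [himg]; exact hconn)
  · rw [← Set.ncard_image_of_injective _ Subtype.val_injective, himg]

private lemma connDomNum_exists (G : SimpleGraph V) [Fintype V] {S : Set V}
    (hS : (G.induce S).Connected) :
    ∃ C : Set V, C ⊆ S ∧ (∀ x ∈ S, x ∉ C → ∃ y ∈ C, G.Adj y x) ∧
      (G.induce C).Connected ∧ C.ncard = connDomNum (G.induce S) := by
  have hne : {n | ∃ D : Set ↥S, IsDomSet (G.induce S) D ∧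
      ((G.induce S).induce D).Connected ∧ D.ncard = n}.Nonempty := by
    refine ⟨_, Set.univ, fun v hv => absurd trivial hv, ?_, rfl⟩
    exact (induceUnivIso (G.induce S)).connected_iff.mpr hS
  obtain ⟨D, hdom, hconn, hcard⟩ := Nat.sInf_mem hne
  refine ⟨Subtype.val '' D, ?_, ?_, ?_, ?_⟩
  · rintro x ⟨y, _, rfl⟩; exact y.2
  · intro x hx hxC
    have hxD : (⟨x, hx⟩ : ↥S) ∉ D := fun h => hxC ⟨⟨x, hx⟩, h, rfl⟩
    obtain ⟨u, huD, hadj⟩ := hdom ⟨x, hx⟩ hxD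
    exact ⟨u, ⟨u, huD, rfl⟩, hadj⟩
  · exact (doubleInduceIso G S D).connected_iff.mp hconn
  · rw [Set.ncard_image_of_injective _ Subtype.val_injective, hcard]; rfl

private lemma partWeight_insert_le (G : SimpleGraph V) [Fintype V] {S : Set V} {u v : V}
    (hconn : (G.induce S).Connected) (hu : u ∈ S) (hadj : G.Adj u v) :
    partWeight G (insert v S) ≤ partWeight G S + 1 := by
  have key : connDomNum (G.induce (insert v S)) ≤ partWeight G S := by
    by_cases hcl : G.IsClique S
    · have h1 : connDomNum (G.induce (insert v S)) ≤ ({u} : Set V).ncard := by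
        apply connDomNum_le
        · simpa using Set.mem_insert_of_mem v hu
        · rintro x (rfl | hxS) hxu
          · exact ⟨u, rfl, hadj⟩
          · have hne : u ≠ x := fun h => hxu (by simp [← h])
            exact ⟨u, rfl, hcl hu hxS hne⟩
        · exact connected_induce_singleton G u
      simp only [Set.ncard_singleton] at h1
      simpa [partWeight, hcl] using h1
    · obtain ⟨C, hCS, hdomC, hconnC, hcard⟩ := connDomNum_exists G hconn
      have hconn' : (G.induce (insert u C)).Connected := by
        by_cases huC : u ∈ C
        · rwa [Set.insert_eq_self.mpr huC]
        · obtain ⟨y, hyC, hyu⟩ := hdomC u hu huC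
          exact connected_insert G hconnC hyC hyu
      have h1 : connDomNum (G.induce (insert v S)) ≤ (insert u C).ncard := by
        apply connDomNum_le
        · exact Set.insert_subset (Set.mem_insert_of_mem v hu)
            (hCS.trans (Set.subset_insert v S))
        · rintro x (rfl | hxS) hxC
          · exact ⟨u, Set.mem_insert u C, hadj⟩
          · have hxC' : x ∉ C := fun h => hxC (Set.mem_insert_of_mem u h)
            obtain ⟨y, hyC, hyx⟩ := hdomC x hxS hxC'
            exact ⟨y, Set.mem_insert_of_mem u hyC, hyx⟩
        · exact hconn'
      have h2 : (insert u C).ncard ≤ C.ncard + 1 := Set.ncard_insert_le u C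
      rw [partWeight, if_neg hcl]
      omega
  by_cases h : G.IsClique (insert v S)
  · rw [partWeight, if_pos h]; omega
  · rw [partWeight, if_neg h]; omega

private lemma improve (T : SimpleGraph V) [Fintype V] (hT : T.Connected)
    (hn : 2 ≤ Fintype.card V) :
    ∀ n (P : Finset (Set V)), P.card ≤ n → IsNeoColonization T P →
    ∃ P', IsNeoColonization T P' ∧ neoWeight T P' ≤ neoWeight T P ∧
      ∀ S ∈ P', 2 ≤ S.ncard := by
  intro n
  induction n with
  | zero =>
    intro P hcard hP
    exfalso
    have : P = ∅ := Finset.card_eq_zero.mp (Nat.le_zero.mp hcard)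
    have hv : Nonempty V := Fintype.card_pos_iff.mp (by omega)
    obtain ⟨v⟩ := hv
    obtain ⟨S, ⟨hSP, _⟩, _⟩ := hP.2 v
    simp [this] at hSP
  | succ n ih =>
    intro P hcard hP
    by_cases hbig : ∀ S ∈ P, 2 ≤ S.ncard
    · exact ⟨P, hP, le_rfl, hbig⟩
    push_neg at hbig
    obtain ⟨S₀, hS₀P, hS₀⟩ := hbig
    have hne : S₀.Nonempty := Set.nonempty_coe_sort.mp (hP.1 S₀ hS₀P).nonempty
    obtain ⟨v, hv⟩ := hne
    have hS₀v : S₀ = {v} := by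
      have h1 : S₀.ncard ≤ 1 := by omega
      rw [Set.ncard_le_one_iff (Set.toFinite S₀)] at h1
      ext x
      exact ⟨fun hx => h1 hx hv, fun hx => hx ▸ hv⟩
    subst hS₀v
    -- find a neighbor of v
    obtain ⟨w, hwv⟩ := Fintype.exists_ne_of_one_lt_card (by omega) v
    obtain ⟨p⟩ := hT.preconnected v w
    have hadjv : ∃ u, T.Adj v u := by
      cases p with
      | nil => exact absurd rfl hwv
      | cons h _ => exact ⟨_, h⟩
    obtain ⟨u, hvu⟩ := hadjv
    -- the part containing u
    obtain ⟨S, ⟨hSP, huS⟩, -⟩ := hP.2 u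
    have heq : ∀ R₁ ∈ P, ∀ R₂ ∈ P, ∀ x, x ∈ R₁ → x ∈ R₂ → R₁ = R₂ := by
      intro R₁ h₁ R₂ h₂ x hx₁ hx₂
      obtain ⟨R, -, huniq⟩ := hP.2 x
      rw [huniq R₁ ⟨h₁, hx₁⟩, huniq R₂ ⟨h₂, hx₂⟩]
    have hvS : v ∉ S := by
      intro h
      have : S = {v} := heq S hSP {v} hS₀P v h rfl
      rw [this] at huS
      exact T.irrefl (huS ▸ hvu)
    have hSne : S ≠ {v} := fun h => hvS (h ▸ rfl)
    set Q : Finset (Set V) := insert (insert v S) ((P.erase {v}).erase S) with hQ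
    have hSmem : S ∈ P.erase {v} := Finset.mem_erase.mpr ⟨hSne, hSP⟩
    have hnotmem : insert v S ∉ (P.erase {v}).erase S := by
      intro h
      have hmP : insert v S ∈ P := Finset.mem_of_mem_erase (Finset.mem_of_mem_erase h)
      have : insert v S = S := heq _ hmP S hSP u (Set.mem_insert_of_mem v huS) huS
      exact hvS (this ▸ Set.mem_insert v S)
    have hconn' : (T.induce (insert v S)).Connected :=
      connected_insert T (hP.1 S hSP) huS hvu.symm
    have hQcol : IsNeoColonization T Q := by
      constructor
      · intro R hR
        rcases Finset.mem_insert.mp hR with rfl | hR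
        · exact hconn'
        · exact hP.1 R (Finset.mem_of_mem_erase (Finset.mem_of_mem_erase hR))
      · intro x
        obtain ⟨Sx, ⟨hSxP, hxSx⟩, huniq⟩ := hP.2 x
        by_cases hx : Sx = {v} ∨ Sx = S
        · refine ⟨insert v S, ⟨Finset.mem_insert_self _ _, ?_⟩, ?_⟩
          · rcases hx with rfl | rfl
            · rcases hxSx with rfl; exact Set.mem_insert x S
            · exact Set.mem_insert_of_mem v hxSx
          · rintro R ⟨hR, hxR⟩
            rcases Finset.mem_insert.mp hR with rfl | hR
            · rfl
            · exfalso
              have hRP := Finset.mem_of_mem_erase (Finset.mem_of_mem_erase hR)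
              have h1 := huniq R ⟨hRP, hxR⟩
              rw [h1] at hR
              rcases hx with rfl | rfl
              · exact (Finset.mem_erase.mp (Finset.mem_of_mem_erase hR)).1 rfl
              · exact (Finset.mem_erase.mp hR).1 rfl
        · push_neg at hx
          refine ⟨Sx, ⟨Finset.mem_insert_of_mem (Finset.mem_erase.mpr
            ⟨hx.2, Finset.mem_erase.mpr ⟨hx.1, hSxP⟩⟩), hxSx⟩, ?_⟩
          rintro R ⟨hR, hxR⟩
          rcases Finset.mem_insert.mp hR with rfl | hR
          · exfalso
            rcases hxR with rfl | hxR
            · exact hx.1 (huniq _ ⟨hS₀P, rfl⟩).symm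
            · exact hx.2 (huniq S ⟨hSP, hxR⟩).symm
          · exact huniq R ⟨Finset.mem_of_mem_erase (Finset.mem_of_mem_erase hR), hxR⟩
    have hwv1 : partWeight T {v} = 1 := by
      rw [partWeight, if_pos]
      exact Set.pairwise_singleton v T.Adj
    have hsum1 : neoWeight T P = partWeight T {v} + partWeight T S +
        ∑ R ∈ (P.erase {v}).erase S, partWeight T R := by
      rw [neoWeight, ← Finset.sum_erase_add _ _ hS₀P, ← Finset.sum_erase_add _ _ hSmem]
      ring
    have hsum2 : neoWeight T Q = partWeight T (insert v S) +
        ∑ R ∈ (P.erase {v}).erase S, partWeight T R := by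
      rw [neoWeight, hQ, Finset.sum_insert hnotmem]
    have hwle : neoWeight T Q ≤ neoWeight T P := by
      have := partWeight_insert_le T (hP.1 S hSP) huS hvu.symm
      omega
    have hPcard2 : 2 ≤ P.card := Finset.one_lt_card.mpr ⟨{v}, hS₀P, S, hSP, hSne.symm⟩
    have hQcard : Q.card ≤ n := by
      have h1 : Q.card ≤ ((P.erase {v}).erase S).card + 1 := Finset.card_insert_le _ _
      have h2 : ((P.erase {v}).erase S).card = P.card - 2 := by
        rw [Finset.card_erase_of_mem hSmem, Finset.card_erase_of_mem hS₀P]; omega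
      omega
    obtain ⟨P', h1, h2, h3⟩ := ih Q hQcard hQcol
    exact ⟨P', h1, h2.trans hwle, h3⟩

end NeoAux

open ED in
/-- For any tree `T` with at least two vertices, there exists a neo-colonization of
minimum total weight in which every part has size at least two. -/
theorem stmt_0 {V : Type} [Fintype V] (T : SimpleGraph V) (hT : T.IsTree)
    (hn : 2 ≤ Fintype.card V) :
    ∃ P : Finset (Set V), IsNeoColonization T P ∧ neoWeight T P = thetaC T ∧
      ∀ S ∈ P, 2 ≤ S.ncard := by
  have hTc : T.Connected := hT.isConnected
  have hWne : {w | ∃ P : Finset (Set V), IsNeoColonization T P ∧ neoWeight T P = w}.Nonempty := by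
    refine ⟨_, {Set.univ}, ⟨?_, ?_⟩, rfl⟩
    · intro S hS
      rw [Finset.mem_singleton] at hS
      subst hS
      exact (SimpleGraph.induceUnivIso T).connected_iff.mpr hTc
    · intro v
      exact ⟨Set.univ, ⟨Finset.mem_singleton_self _, trivial⟩,
        fun R hR => Finset.mem_singleton.mp hR.1⟩
  obtain ⟨P, hP, hPw⟩ := Nat.sInf_mem hWne
  obtain ⟨P', h1, h2, h3⟩ := improve T hTc hn P.card P le_rfl hP
  refine ⟨P', h1, ?_, h3⟩
  have hle : thetaC T ≤ neoWeight T P' := Nat.sInf_le ⟨P', h1, rfl⟩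
  have : neoWeight T P = thetaC T := hPw
  omega
end

section
/- For any graph G, the m-eternal domination number of G is at most the minimum weight of a neo-colonization of G, i.e., γ_m^∞(G) ≤ θ_c(G). -/
open scoped Classical

namespace EDAux
open ED SimpleGraph

variable {V : Type} {G : SimpleGraph V}

lemma shift_exists {a b : V} (p : G.Walk a b) : p.IsPath →
    ∀ (D : Set V), (∀ x ∈ p.support, x ∈ D) → ∀ r : V, r ∉ D → G.Adj b r →
    ∃ f : V → V, Set.BijOn f D (insert r (D \ {a})) ∧ ∀ z ∈ D, f z = z ∨ G.Adj z (f z) := by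
  induction p with
  | @nil a =>
    intro _ D hsub r hr hadj
    have ha : a ∈ D := hsub a (by simp)
    refine ⟨fun z => if z = a then r else z, ⟨?_, ?_, ?_⟩, ?_⟩
    · intro z hz
      by_cases hza : z = a
      · simp [hza]
      · simp only [if_neg hza]
        exact Set.mem_insert_of_mem _ ⟨hz, by simpa using hza⟩
    · intro z1 h1 z2 h2 he
      by_cases hz1 : z1 = a <;> by_cases hz2 : z2 = a <;>
        simp only [hz1, hz2, if_pos, if_neg, ite_true, ite_false] at he
      · exact hz1.trans hz2.symm
      · exact absurd (he ▸ h2) hr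
      · exact absurd (he ▸ h1) hr
      · exact he
    · intro y hy
      rcases hy with rfl | ⟨hyD, hya⟩
      · exact ⟨a, ha, by simp⟩
      · have hya' : y ≠ a := by simpa using hya
        exact ⟨y, hyD, by simp [hya']⟩
    · intro z hz
      by_cases hza : z = a
      · subst hza; right; simpa using hadj
      · left; simp [hza]
  | @cons a c b h q ih =>
    intro hp D hsub r hr hadj
    rw [Walk.cons_isPath_iff] at hp
    have hc : c ∈ D := hsub c (by simp)
    have hca : c ≠ a := fun hh => hp.2 (hh ▸ q.start_mem_support)
    have haD : a ∈ D := hsub a (by simp)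
    obtain ⟨f', hbij', hmv'⟩ := ih hp.1 (D \ {a})
      (fun x hx => ⟨hsub x (by simp [hx]), by intro hxa; rw [Set.mem_singleton_iff] at hxa; exact hp.2 (hxa ▸ hx)⟩) r
      (fun hh => hr hh.1) hadj
    refine ⟨fun z => if z = a then c else f' z, ⟨?_, ?_, ?_⟩, ?_⟩
    · intro z hz
      by_cases hza : z = a
      · simp only [if_pos hza]
        exact Set.mem_insert_of_mem _ ⟨hc, by simpa using hca⟩
      · simp only [if_neg hza]
        rcases hbij'.mapsTo ⟨hz, by simpa using hza⟩ with rfl | hmem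
        · exact Set.mem_insert _ _
        · exact Set.mem_insert_of_mem _ hmem.1
    · intro z1 h1 z2 h2 he
      by_cases hz1 : z1 = a <;> by_cases hz2 : z2 = a <;>
        simp only [hz1, hz2, if_pos, if_neg, ite_true, ite_false] at he
      · exact hz1.trans hz2.symm
      · exfalso
        rcases hbij'.mapsTo ⟨h2, by simpa using hz2⟩ with hh | hh
        · exact hr (hh ▸ he ▸ hc)
        · exact (by simpa using hh.2 : f' z2 ≠ c) he.symm
      · exfalso
        rcases hbij'.mapsTo ⟨h1, by simpa using hz1⟩ with hh | hh
        · exact hr (hh ▸ he ▸ hc)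
        · exact (by simpa using hh.2 : f' z1 ≠ c) he
      · exact hbij'.injOn ⟨h1, by simpa using hz1⟩ ⟨h2, by simpa using hz2⟩ he
    · intro y hy
      by_cases hyc : y = c
      · exact ⟨a, haD, by simp [hyc]⟩
      · have : y ∈ insert r ((D \ {a}) \ {c}) := by
          rcases hy with rfl | ⟨hyD, hya⟩
          · exact Set.mem_insert _ _
          · exact Set.mem_insert_of_mem _ ⟨⟨hyD, hya⟩, by simpa using hyc⟩
        obtain ⟨z, hzD, hz⟩ := hbij'.surjOn this
        have hza : z ≠ a := by simpa using hzD.2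
        exact ⟨z, hzD.1, by simp [hza, hz]⟩
    · intro z hz
      by_cases hza : z = a
      · right; subst hza; simpa using h
      · simp only [if_neg hza]
        exact hmv' z ⟨hz, by simpa using hza⟩

lemma connDomSet_nonempty (hc : G.Connected) :
    {n | ∃ D : Set V, IsDomSet G D ∧ (G.induce D).Connected ∧ D.ncard = n}.Nonempty :=
  ⟨_, Set.univ, fun v hv => absurd (Set.mem_univ v) hv,
    (Iso.connected_iff (induceUnivIso G)).mpr hc, rfl⟩

lemma connDomNum_lt_card [Fintype V] (hc : G.Connected) (h2 : 2 ≤ Fintype.card V) :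
    connDomNum G < Fintype.card V := by
  obtain ⟨u⟩ := hc.nonempty
  haveI : Nonempty V := ⟨u⟩
  obtain ⟨v, hv⟩ := Finite.exists_max (fun x => G.dist u x)
  have huv : u ≠ v := by
    rintro rfl
    have : ∀ y : V, y = u := by
      intro y
      have := hv y
      simp only [SimpleGraph.dist_self, Nat.le_zero] at this
      exact (hc.dist_eq_zero_iff.mp this).symm
    have : Fintype.card V ≤ 1 := Fintype.card_le_one_iff.mpr (fun a b => (this a).trans (this b).symm)
    omega
  -- v has a neighbor
  obtain ⟨w, hwv, hwne⟩ : ∃ w, G.Adj w v ∧ w ≠ v := by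
    obtain ⟨p⟩ := hc.preconnected v u
    cases p with
    | nil => exact absurd rfl huv.symm
    | cons h q => exact ⟨_, h.symm, h.ne'⟩
  set T : Set V := {v}ᶜ with hT
  have hdom : IsDomSet G T := by
    intro x hx
    have : x = v := by simpa [hT] using hx
    exact ⟨w, hwne, this ▸ hwv⟩
  have hconn : (G.induce T).Connected := by
    apply G.induce_connected_of_patches u (by simpa [hT] using huv)
    intro x hx
    have hxv : x ≠ v := by simpa [hT] using hx
    obtain ⟨p, hlen⟩ := (hc.preconnected u x).exists_walk_length_eq_dist
    have hvp : v ∉ p.support := by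
      intro hvs
      have h1 : G.dist u v ≤ (p.takeUntil v hvs).length := SimpleGraph.dist_le _
      have h2 : G.dist v x ≤ (p.dropUntil v hvs).length := SimpleGraph.dist_le _
      have h3 : (p.takeUntil v hvs).length + (p.dropUntil v hvs).length = p.length := by
        rw [← Walk.length_append, Walk.take_spec]
      have h4 : G.dist u x ≤ G.dist u v := hv x
      have : G.dist v x = 0 := by omega
      exact hxv (hc.dist_eq_zero_iff.mp this).symm
    refine ⟨{y | y ∈ p.support}, fun y hy => ?_, p.start_mem_support, p.end_mem_support,
      (Walk.connected_induce_support p).preconnected _ _⟩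
    simp only [hT, Set.mem_compl_iff, Set.mem_singleton_iff]
    rintro rfl
    exact hvp hy
  have hcard : T.ncard = Fintype.card V - 1 := by
    have h1 : (insert v T).ncard = T.ncard + 1 :=
      Set.ncard_insert_of_notMem (by simp [hT]) (Set.toFinite _)
    have h2 : insert v T = Set.univ := by
      ext x; by_cases hx : x = v <;> simp [hT, hx]
    rw [h2, Set.ncard_univ, Nat.card_eq_fintype_card] at h1
    omega
  have := Nat.sInf_le (s := {n | ∃ D : Set V, IsDomSet G D ∧ (G.induce D).Connected ∧ D.ncard = n})
    ⟨T, hdom, hconn, rfl⟩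
  rw [hcard] at this
  calc connDomNum G ≤ Fintype.card V - 1 := this
  _ < Fintype.card V := by omega

/-- local defense of a part -/
def LocalDefend (G : SimpleGraph V) (S : Set V) (k : ℕ) : Prop :=
  ∃ F : Set (Set V), F.Nonempty ∧
    (∀ D ∈ F, D ⊆ S ∧ D.ncard = k ∧ ∀ v ∈ S, v ∉ D → ∃ u ∈ D, G.Adj u v) ∧
    ∀ D ∈ F, ∀ r ∈ S, r ∉ D → ∃ D' ∈ F, r ∈ D' ∧
      ∃ f : V → V, Set.BijOn f D D' ∧ ∀ v ∈ D, f v = v ∨ G.Adj v (f v)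

lemma localDefend_clique {S : Set V} (hS : S.Nonempty) (hcl : G.IsClique S) :
    LocalDefend G S 1 := by
  refine ⟨{E | ∃ v ∈ S, E = {v}}, ⟨{hS.choose}, hS.choose, hS.choose_spec, rfl⟩, ?_, ?_⟩
  · rintro D ⟨v, hvS, rfl⟩
    refine ⟨by simpa using hvS, Set.ncard_singleton v, ?_⟩
    intro x hxS hxD
    have hxv : v ≠ x := fun hh => hxD (by simp [hh])
    exact ⟨v, rfl, hcl hvS hxS hxv⟩
  · rintro D ⟨v, hvS, rfl⟩ r hrS hrD
    have hvr : v ≠ r := fun hh => hrD (by simp [hh])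
    refine ⟨{r}, ⟨r, hrS, rfl⟩, rfl, fun z => if z = v then r else z, ⟨?_, ?_, ?_⟩, ?_⟩
    · rintro z rfl; simp
    · rintro z1 rfl z2 rfl _; rfl
    · rintro z rfl; exact ⟨v, rfl, by simp⟩
    · rintro z rfl; right; simpa using hcl hvS hrS hvr

lemma localDefend_conn [Fintype V] {S : Set V} (hconn : (G.induce S).Connected)
    (hncl : ¬ G.IsClique S) : LocalDefend G S (1 + connDomNum (G.induce S)) := by
  set H := G.induce S with hH
  -- S has at least two elements
  have h2 : 2 ≤ Fintype.card ↥S := by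
    rw [SimpleGraph.isClique_iff, Set.Pairwise] at hncl
    push_neg at hncl
    obtain ⟨x, hx, y, hy, hne, -⟩ := hncl
    have : (⟨x, hx⟩ : ↥S) ≠ ⟨y, hy⟩ := by simpa using hne
    exact Fintype.one_lt_card_iff.mpr ⟨_, _, this⟩
  obtain ⟨D, hdom, hDconn, hDcard⟩ :
      ∃ D : Set ↥S, IsDomSet H D ∧ (H.induce D).Connected ∧ D.ncard = connDomNum H :=
    Nat.sInf_mem (connDomSet_nonempty hconn)
  set D₀ : Set V := Subtype.val '' D with hD₀
  have hD₀S : D₀ ⊆ S := Subtype.coe_image_subset S D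
  have hcard₀ : D₀.ncard = connDomNum H := by
    rw [hD₀, Set.ncard_image_of_injective _ Subtype.val_injective, hDcard]
  -- D₀ is a proper subset of S
  have hproper : ∃ v, v ∈ S ∧ v ∉ D₀ := by
    by_contra hcon
    push_neg at hcon
    have hSD : S ⊆ D₀ := fun x hx => hcon x hx
    have : S.ncard ≤ D₀.ncard := Set.ncard_le_ncard hSD (Set.toFinite _)
    have hSn : S.ncard = Fintype.card ↥S := by
      rw [← Nat.card_coe_set_eq, Nat.card_eq_fintype_card]
    have := connDomNum_lt_card (G := H) hconn h2
    omega
  -- domination at the level of V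
  have hdomV : ∀ x ∈ S, x ∉ D₀ → ∃ u ∈ D₀, G.Adj u x := by
    intro x hx hxD₀
    have hxD : (⟨x, hx⟩ : ↥S) ∉ D := fun hh => hxD₀ ⟨_, hh, rfl⟩
    obtain ⟨u, huD, hadj⟩ := hdom _ hxD
    exact ⟨u.val, ⟨u, huD, rfl⟩, by simpa [hH] using hadj⟩
  -- paths inside D₀ at the level of V
  have hwalk : ∀ w ∈ D₀, ∀ u ∈ D₀, ∃ p : G.Walk w u, p.IsPath ∧ ∀ x ∈ p.support, x ∈ D₀ := by
    rintro w ⟨w', hw', rfl⟩ u ⟨u', hu', rfl⟩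
    obtain ⟨q⟩ := hDconn.preconnected ⟨w', hw'⟩ ⟨u', hu'⟩
    refine ⟨((q.map (SimpleGraph.Embedding.induce (G := H) D).toHom).map
      (SimpleGraph.Embedding.induce (G := G) S).toHom).bypass, Walk.bypass_isPath _, ?_⟩
    intro x hx
    have hx2 := Walk.support_bypass_subset _ hx
    erw [Walk.support_map, Walk.support_map] at hx2
    rw [List.map_map] at hx2
    obtain ⟨y, hy, rfl⟩ := List.mem_map.mp hx2
    exact ⟨y.1, y.2, rfl⟩
  refine ⟨{E | ∃ v, (v ∈ S ∧ v ∉ D₀) ∧ E = insert v D₀}, ?_, ?_, ?_⟩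
  · obtain ⟨v, hv⟩ := hproper
    exact ⟨insert v D₀, v, hv, rfl⟩
  · rintro E ⟨v, ⟨hvS, hvD⟩, rfl⟩
    refine ⟨Set.insert_subset hvS hD₀S, ?_, ?_⟩
    · rw [Set.ncard_insert_of_notMem hvD (Set.toFinite _), hcard₀]; omega
    · intro x hxS hxE
      obtain ⟨u, huD, hadj⟩ := hdomV x hxS (fun hh => hxE (Set.mem_insert_of_mem _ hh))
      exact ⟨u, Set.mem_insert_of_mem _ huD, hadj⟩
  · rintro E ⟨v, ⟨hvS, hvD⟩, rfl⟩ r hrS hrE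
    have hrD₀ : r ∉ D₀ := fun hh => hrE (Set.mem_insert_of_mem _ hh)
    have hrv : r ≠ v := fun hh => hrE (by simp [hh])
    obtain ⟨u, huD, hur⟩ := hdomV r hrS hrD₀
    obtain ⟨w, hwD, hwv⟩ := hdomV v hvS hvD
    obtain ⟨p0, hp0, hp0sub⟩ := hwalk w hwD u huD
    have hvp0 : v ∉ p0.support := fun hh => hvD (hp0sub v hh)
    have hq : (Walk.cons hwv.symm p0).IsPath := by
      rw [Walk.cons_isPath_iff]; exact ⟨hp0, hvp0⟩
    obtain ⟨f, hbij, hmv⟩ := shift_exists (Walk.cons hwv.symm p0) hq (insert v D₀)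
      (by
        intro x hx
        rw [Walk.support_cons, List.mem_cons] at hx
        rcases hx with rfl | hx
        · exact Set.mem_insert _ _
        · exact Set.mem_insert_of_mem _ (hp0sub x hx)) r
      (fun hh => hrE hh) hur
    have hrw : (insert v D₀) \ {v} = D₀ := by
      rw [Set.insert_diff_of_mem _ (Set.mem_singleton v), Set.diff_singleton_eq_self hvD]
    refine ⟨insert r D₀, ⟨r, ⟨hrS, hrD₀⟩, rfl⟩, Set.mem_insert _ _, f, ?_, hmv⟩
    rwa [hrw] at hbij

lemma ncard_biUnion_sum [Fintype V] (P : Finset (Set V)) (c : Set V → Set V)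
    (hdisj : ∀ S ∈ P, ∀ T ∈ P, S ≠ T → Disjoint (c S) (c T)) :
    (⋃ S ∈ P, c S).ncard = ∑ S ∈ P, (c S).ncard := by
  induction P using Finset.induction_on with
  | empty => simp
  | @insert a P ha ih =>
    rw [Finset.set_biUnion_insert, Finset.sum_insert ha,
      Set.ncard_union_eq ?_ (Set.toFinite _) (Set.toFinite _),
      ih (fun S hS T hT h => hdisj S (Finset.mem_insert_of_mem hS) T
        (Finset.mem_insert_of_mem hT) h)]
    rw [Set.disjoint_iUnion₂_right]
    intro S hS
    exact hdisj a (Finset.mem_insert_self _ _) S (Finset.mem_insert_of_mem hS)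
      (fun hh => ha (hh ▸ hS))

lemma combine [Fintype V] (P : Finset (Set V)) (hP : IsNeoColonization G P)
    (k : Set V → ℕ) (h : ∀ S ∈ P, LocalDefend G S (k S)) :
    CanDefendAllMove G (∑ S ∈ P, k S) := by
  -- distinct parts are disjoint
  have hdisj : ∀ S ∈ P, ∀ T ∈ P, S ≠ T → Disjoint S T := by
    intro S hS T hT hne
    rw [Set.disjoint_left]
    intro x hxS hxT
    obtain ⟨U, -, hU⟩ := hP.2 x
    exact hne ((hU S ⟨hS, hxS⟩).trans (hU T ⟨hT, hxT⟩).symm)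
  -- choose families
  have hF : ∀ S : Set V, ∃ F : Set (Set V), S ∈ P → (F.Nonempty ∧
      (∀ D ∈ F, D ⊆ S ∧ D.ncard = k S ∧ ∀ v ∈ S, v ∉ D → ∃ u ∈ D, G.Adj u v) ∧
      ∀ D ∈ F, ∀ r ∈ S, r ∉ D → ∃ D' ∈ F, r ∈ D' ∧
        ∃ f : V → V, Set.BijOn f D D' ∧ ∀ v ∈ D, f v = v ∨ G.Adj v (f v)) := by
    intro S
    by_cases hS : S ∈ P
    · exact ⟨(h S hS).choose, fun _ => (h S hS).choose_spec⟩
    · exact ⟨∅, fun h' => absurd h' hS⟩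
  choose FF hFF using hF
  refine ⟨{D | ∃ c : Set V → Set V, (∀ S ∈ P, c S ∈ FF S) ∧ D = ⋃ S ∈ P, c S}, ?_, ?_, ?_⟩
  · -- nonempty
    refine ⟨_, fun S => if hS : S ∈ P then ((hFF S hS).1).choose else ∅, ?_, rfl⟩
    intro S hS
    simp only [dif_pos hS]
    exact ((hFF S hS).1).choose_spec
  · -- every configuration is dominating of the right size
    rintro D ⟨c, hc, rfl⟩
    have hcs : ∀ S ∈ P, c S ⊆ S := fun S hS => ((hFF S hS).2.1 _ (hc S hS)).1
    constructor
    · intro v hv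
      obtain ⟨S, ⟨hS, hvS⟩, -⟩ := hP.2 v
      have hvc : v ∉ c S := fun hh => hv (Set.mem_biUnion hS hh)
      obtain ⟨u, huc, hadj⟩ := ((hFF S hS).2.1 _ (hc S hS)).2.2 v hvS hvc
      exact ⟨u, Set.mem_biUnion hS huc, hadj⟩
    · rw [ncard_biUnion_sum P c (fun S hS T hT hne =>
        Set.disjoint_of_subset (hcs S hS) (hcs T hT) (hdisj S hS T hT hne))]
      exact Finset.sum_congr rfl (fun S hS => ((hFF S hS).2.1 _ (hc S hS)).2.1)
  · -- defense
    rintro D ⟨c, hc, rfl⟩ r hr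
    have hcs : ∀ S ∈ P, c S ⊆ S := fun S hS => ((hFF S hS).2.1 _ (hc S hS)).1
    obtain ⟨S₀, ⟨hS₀, hrS₀⟩, -⟩ := hP.2 r
    have hrc : r ∉ c S₀ := fun hh => hr (Set.mem_biUnion hS₀ hh)
    obtain ⟨E', hE', hrE', f₀, hbij₀, hmv₀⟩ := (hFF S₀ hS₀).2.2 _ (hc S₀ hS₀) r hrS₀ hrc
    have hE'S₀ : E' ⊆ S₀ := ((hFF S₀ hS₀).2.1 _ hE').1
    -- helper: an element of c T for T ≠ S₀ is not in S₀
    have hout : ∀ T ∈ P, T ≠ S₀ → ∀ x ∈ c T, x ∉ S₀ := by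
      intro T hT hne x hx hxS₀
      exact (hdisj T hT S₀ hS₀ hne).le_bot ⟨hcs T hT hx, hxS₀⟩ |>.elim
    refine ⟨⋃ S ∈ P, (fun T => if T = S₀ then E' else c T) S,
      ⟨(fun T => if T = S₀ then E' else c T), ?_, rfl⟩,
      Set.mem_biUnion hS₀ (by simp [hrE']), fun z => if z ∈ c S₀ then f₀ z else z,
      ⟨?_, ?_, ?_⟩, ?_⟩
    · intro S hS
      by_cases hSe : S = S₀ <;> simp only [if_pos, if_neg, hSe, ite_true, ite_false]
      · exact hE'
      · exact hc S hS
    · -- mapsTo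
      intro z hz
      by_cases hzc : z ∈ c S₀
      · simp only [if_pos hzc]
        exact Set.mem_biUnion hS₀ (by simpa using hbij₀.mapsTo hzc)
      · simp only [if_neg hzc]
        obtain ⟨T, hT, hzT⟩ := Set.mem_iUnion₂.mp hz
        have hTne : T ≠ S₀ := fun hh => hzc (hh ▸ hzT)
        exact Set.mem_biUnion hT (by simp [if_neg hTne, hzT])
    · -- injOn
      intro z1 h1 z2 h2 he
      by_cases hz1 : z1 ∈ c S₀ <;> by_cases hz2 : z2 ∈ c S₀ <;>
        simp only [hz1, hz2, if_pos, if_neg, ite_true, ite_false] at he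
      · exact hbij₀.injOn hz1 hz2 he
      · exfalso
        obtain ⟨T, hT, hzT⟩ := Set.mem_iUnion₂.mp h2
        have hTne : T ≠ S₀ := fun hh => hz2 (hh ▸ hzT)
        exact hout T hT hTne z2 hzT (hE'S₀ (he ▸ hbij₀.mapsTo hz1))
      · exfalso
        obtain ⟨T, hT, hzT⟩ := Set.mem_iUnion₂.mp h1
        have hTne : T ≠ S₀ := fun hh => hz1 (hh ▸ hzT)
        exact hout T hT hTne z1 hzT (hE'S₀ (he ▸ hbij₀.mapsTo hz2))
      · exact he
    · -- surjOn
      intro y hy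
      obtain ⟨T, hT, hyT⟩ := Set.mem_iUnion₂.mp hy
      by_cases hTe : T = S₀
      · subst hTe
        have hyT' : y ∈ E' := by simpa using hyT
        obtain ⟨z, hzc, hz⟩ := hbij₀.surjOn hyT'
        exact ⟨z, Set.mem_biUnion hT hzc, by simp [hzc, hz]⟩
      · have hyT' : y ∈ c T := by simpa [hTe] using hyT
        have hyn : y ∉ c S₀ := fun hh => hout T hT hTe y hyT' (hcs S₀ hS₀ hh)
        exact ⟨y, Set.mem_biUnion hT hyT', by simp [hyn]⟩
    · -- movement
      intro z hz
      by_cases hzc : z ∈ c S₀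
      · simp only [if_pos hzc]
        exact hmv₀ z hzc
      · left; simp [hzc]

lemma comp_induce_connected (c : G.ConnectedComponent) : (G.induce c.supp).Connected := by
  obtain ⟨u, rfl⟩ := c.exists_rep
  have hu : u ∈ (G.connectedComponentMk u).supp := rfl
  apply G.induce_connected_of_patches u hu
  intro w hw
  have hr : G.Reachable u w := (SimpleGraph.ConnectedComponent.eq.mp hw).symm
  obtain ⟨p⟩ := hr
  refine ⟨{x | x ∈ p.support}, fun x hx => ?_, p.start_mem_support, p.end_mem_support,
    (Walk.connected_induce_support p).preconnected _ _⟩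
  exact SimpleGraph.ConnectedComponent.sound (SimpleGraph.Reachable.symm ⟨p.takeUntil x hx⟩)

lemma exists_neo [Fintype V] (G : SimpleGraph V) : ∃ P : Finset (Set V), IsNeoColonization G P := by
  haveI : Fintype G.ConnectedComponent := Fintype.ofFinite _
  refine ⟨Finset.image (fun c : G.ConnectedComponent => c.supp) Finset.univ, ?_, ?_⟩
  · intro S hS
    obtain ⟨c, -, rfl⟩ := Finset.mem_image.mp hS
    exact comp_induce_connected c
  · intro v
    refine ⟨(G.connectedComponentMk v).supp,
      ⟨Finset.mem_image.mpr ⟨_, Finset.mem_univ _, rfl⟩, rfl⟩, ?_⟩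
    rintro S ⟨hS, hvS⟩
    obtain ⟨c, -, rfl⟩ := Finset.mem_image.mp hS
    rw [SimpleGraph.ConnectedComponent.mem_supp_iff] at hvS
    rw [hvS]

end EDAux

open ED in
/-- For any graph `G`, the m-eternal domination number is at most the minimum weight
of a neo-colonization: `γ_m^∞(G) ≤ θ_c(G)`. -/
theorem stmt_1 {V : Type} [Fintype V] (G : SimpleGraph V) :
    mEternalDomNum G ≤ thetaC G := by
  have hne : {w | ∃ P : Finset (Set V), IsNeoColonization G P ∧ neoWeight G P = w}.Nonempty := by
    obtain ⟨P, hP⟩ := EDAux.exists_neo G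
    exact ⟨_, P, hP, rfl⟩
  obtain ⟨P, hPneo, hPw⟩ := Nat.sInf_mem hne
  have hcan : CanDefendAllMove G (neoWeight G P) := by
    rw [neoWeight]
    apply EDAux.combine P hPneo
    intro S hS
    by_cases hcl : G.IsClique S
    · have h1 : partWeight G S = 1 := if_pos hcl
      rw [h1]
      have hne' : Nonempty ↥S := (hPneo.1 S hS).nonempty
      exact EDAux.localDefend_clique (Set.nonempty_coe_sort.mp hne') hcl
    · have h1 : partWeight G S = 1 + connDomNum (G.induce S) := if_neg hcl
      rw [h1]
      exact EDAux.localDefend_conn (hPneo.1 S hS) hcl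
  have h2 : mEternalDomNum G ≤ neoWeight G P := Nat.sInf_le hcan
  have h3 : thetaC G = neoWeight G P := hPw.symm
  rw [h3]
  exact h2
end

section
/- For any tree T on n ≥ 3 vertices, the connected domination number of T equals n minus the number of leaves of T. -/
open scoped Classical

open ED

section Aux

variable {V : Type}

-- closure under adjacency propagates along walks
private lemma walk_closed {G : SimpleGraph V} {S : Set V}
    (hS : ∀ a b, a ∈ S → G.Adj a b → b ∈ S) :
    ∀ {x y : V} (_ : G.Walk x y), x ∈ S → y ∈ S := by
  intro x y p
  induction p with
  | nil => exact fun h => h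
  | cons h q ih => exact fun hx => ih (hS _ _ hx h)

-- a walk whose support lies in S gives reachability in the induced graph
private lemma reachable_induce_of_support {G : SimpleGraph V} {S : Set V} :
    ∀ {x y : V} (p : G.Walk x y) (hx : x ∈ S) (hy : y ∈ S),
    (∀ z ∈ p.support, z ∈ S) → (G.induce S).Reachable ⟨x, hx⟩ ⟨y, hy⟩ := by
  intro x y p
  induction p with
  | nil =>
    intro hx hy _
    exact SimpleGraph.Reachable.refl _
  | @cons a b c h q ih =>
    intro hx hy hsupp
    have hb : b ∈ S := hsupp b (by simp [SimpleGraph.Walk.support_cons])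
    have hadj : (G.induce S).Adj ⟨a, hx⟩ ⟨b, hb⟩ := by
      simp [SimpleGraph.comap_adj, h]
    exact hadj.reachable.trans
      (ih hb hy (fun z hz => hsupp z (by simp [SimpleGraph.Walk.support_cons, hz])))

-- every vertex on a path towards a non-leaf, other than the start, is a non-leaf
private lemma path_support_not_leaf [Fintype V] {G : SimpleGraph V} :
    ∀ {x y : V} (p : G.Walk x y), p.IsPath → ¬ IsLeaf G y →
      ∀ z ∈ p.support, z ≠ x → ¬ IsLeaf G z := by
  intro x y p
  induction p with
  | nil =>
    intro _ _ z hz hzx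
    simp [SimpleGraph.Walk.support_nil] at hz
    exact absurd hz hzx
  | @cons a b c h q ih =>
    intro hp hy z hz hza
    obtain ⟨hq, hnot⟩ := (SimpleGraph.Walk.cons_isPath_iff h q).mp hp
    rw [SimpleGraph.Walk.support_cons, List.mem_cons] at hz
    rcases hz with rfl | hz
    · exact absurd rfl hza
    by_cases hzb : z = b
    · subst hzb
      cases q with
      | nil => exact hy
      | @cons _ b' _ h' q' =>
        intro hleaf
        have ha : a ∈ G.neighborSet z := h.symm
        have hb' : b' ∈ G.neighborSet z := h'
        have hab' : a ≠ b' := by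
          rintro rfl
          exact hnot (by simp [SimpleGraph.Walk.support_cons])
        have h2 : 1 < (G.neighborSet z).ncard := by
          rw [Set.one_lt_ncard (Set.toFinite _)]
          exact ⟨a, ha, b', hb', hab'⟩
        rw [IsLeaf] at hleaf
        omega
    · exact ih hq hy z hz hzb

-- in a connected graph on ≥ 3 vertices, the neighbor of a leaf is not a leaf
private lemma leaf_neighbor_not_leaf [Fintype V] {G : SimpleGraph V}
    (hc : G.Connected) (hn : 3 ≤ Fintype.card V) {v u : V}
    (hv : G.neighborSet v = {u}) : ¬ IsLeaf G u := by
  intro hu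
  obtain ⟨w, hw⟩ := Set.ncard_eq_one.mp hu
  have hvu : G.Adj v u := by rw [← SimpleGraph.mem_neighborSet, hv]; rfl
  have hwv : w = v := by
    have : v ∈ G.neighborSet u := hvu.symm
    rw [hw] at this; exact this.symm ▸ rfl
  rw [hwv] at hw
  -- {u, v} is closed under adjacency
  have hclosed : ∀ a b : V, a ∈ ({u, v} : Set V) → G.Adj a b → b ∈ ({u, v} : Set V) := by
    rintro a b (rfl | rfl) hab
    · have : b ∈ G.neighborSet a := hab
      rw [hw] at this; right; exact this
    · have : b ∈ G.neighborSet a := hab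
      rw [hv] at this; left; exact this
  -- so everything reachable from v is in {u, v}, hence V ⊆ {u, v}
  have hall : ∀ x : V, x ∈ ({u, v} : Set V) := by
    intro x
    obtain ⟨p⟩ := hc.preconnected v x
    exact walk_closed hclosed p (by right; rfl)
  have : (Set.univ : Set V).ncard ≤ ({u, v} : Set V).ncard :=
    Set.ncard_le_ncard (fun x _ => hall x) (Set.toFinite _)
  rw [Set.ncard_univ, Nat.card_eq_fintype_card] at this
  have h2 : ({u, v} : Set V).ncard ≤ 2 := by
    apply le_trans (Set.ncard_insert_le _ _)
    simp
  omega

end Aux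
open ED in
/-- For any tree `T` on `n ≥ 3` vertices, the connected domination number equals
`n` minus the number of leaves. -/
theorem stmt_3 {V : Type} [Fintype V] (T : SimpleGraph V) (hT : T.IsTree)
    (hn : 3 ≤ Fintype.card V) :
    connDomNum T = Fintype.card V - {v | IsLeaf T v}.ncard := by
  classical
  have hconnT : T.Connected := hT.isConnected
  set L : Set V := {v | IsLeaf T v} with hL
  set D₀ : Set V := {v | ¬ IsLeaf T v} with hD₀def
  -- cardinality bookkeeping
  have hcompl : D₀ = Lᶜ := by ext v; simp [hD₀def, hL]
  have hcard : L.ncard + D₀.ncard = Fintype.card V := by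
    rw [hcompl]
    rw [Set.ncard_add_ncard_compl L (Set.toFinite _) (Set.toFinite _),
      Nat.card_eq_fintype_card]
  -- the unique neighbor of a leaf is internal
  have leafnbr : ∀ v, IsLeaf T v → ∃ u, T.Adj u v ∧ u ∈ D₀ := by
    intro v hv
    obtain ⟨u, hu⟩ := Set.ncard_eq_one.mp hv
    have hadj : T.Adj v u := by rw [← SimpleGraph.mem_neighborSet, hu]; rfl
    exact ⟨u, hadj.symm, leaf_neighbor_not_leaf hconnT hn hu⟩
  -- D₀ is a dominating set
  have hdom0 : IsDomSet T D₀ := by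
    intro v hv
    have hv' : IsLeaf T v := by
      by_contra h; exact hv h
    obtain ⟨u, hadj, hu⟩ := leafnbr v hv'
    exact ⟨u, hu, hadj⟩
  -- D₀ is nonempty
  have hne0 : D₀.Nonempty := by
    have : Nonempty V := by
      rw [← Fintype.card_pos_iff]; omega
    obtain ⟨v⟩ := this
    by_cases hv : IsLeaf T v
    · obtain ⟨u, _, hu⟩ := leafnbr v hv
      exact ⟨u, hu⟩
    · exact ⟨v, hv⟩
  -- D₀ induces a connected subgraph
  have hconn0 : (T.induce D₀).Connected := by
    rw [SimpleGraph.connected_iff]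
    refine ⟨?_, ⟨⟨hne0.choose, hne0.choose_spec⟩⟩⟩
    intro x y
    obtain ⟨w⟩ := hconnT.preconnected x.1 y.1
    have hy1 : ¬ IsLeaf T y.1 := y.2
    have hsupp : ∀ z ∈ w.toPath.1.support, z ∈ D₀ := by
      intro z hz
      by_cases hzx : z = x.1
      · exact hzx ▸ x.2
      · exact path_support_not_leaf w.toPath.1 w.toPath.2 hy1 z hz hzx
    exact reachable_induce_of_support w.toPath.1 x.2 y.2 hsupp
  -- the set defining connDomNum is nonempty; pick an optimal D
  have hmem0 : D₀.ncard ∈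
      {n | ∃ D : Set V, IsDomSet T D ∧ (T.induce D).Connected ∧ D.ncard = n} :=
    ⟨D₀, hdom0, hconn0, rfl⟩
  have hub : connDomNum T ≤ D₀.ncard := Nat.sInf_le hmem0
  obtain ⟨D, hdom, hconn, hDcard⟩ := Nat.sInf_mem (Set.nonempty_of_mem hmem0)
  -- every internal vertex belongs to D
  have hsub : D₀ ⊆ D := by
    intro v hv
    by_contra hvD
    obtain ⟨u, huD, huv⟩ := hdom v hvD
    have hvu : T.Adj v u := huv.symm
    -- v has a neighbor a ≠ u
    have h2 : 1 < (T.neighborSet v).ncard := by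
      have hpos : 0 < (T.neighborSet v).ncard :=
        (Set.ncard_pos (Set.toFinite _)).mpr ⟨u, hvu⟩
      have hne1 : (T.neighborSet v).ncard ≠ 1 := hv
      omega
    obtain ⟨a, ha, hau⟩ := Set.exists_ne_of_one_lt_ncard h2 u
    have hva : T.Adj v a := ha
    -- a is dominated: some x ∈ D with x = a or x ~ a
    have hx : ∃ x ∈ D, x = a ∨ T.Adj x a := by
      by_cases haD : a ∈ D
      · exact ⟨a, haD, Or.inl rfl⟩
      · obtain ⟨x, hxD, hxa⟩ := hdom a haD
        exact ⟨x, hxD, Or.inr hxa⟩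
    obtain ⟨x, hxD, hxcase⟩ := hx
    -- a walk from u to x inside D
    obtain ⟨w0⟩ := hconn.preconnected ⟨u, huD⟩ ⟨x, hxD⟩
    obtain ⟨w1, hw1supp⟩ : ∃ w1 : T.Walk u x, ∀ z ∈ w1.support, z ∈ D := by
      refine ⟨w0.map (SimpleGraph.Embedding.induce D).toHom, ?_⟩
      intro z hz
      have hz : z ∈ w0.support.map (SimpleGraph.Embedding.induce (G := T) D).toHom := by
        rw [← SimpleGraph.Walk.support_map]; exact hz
      rw [List.mem_map] at hz
      obtain ⟨⟨z', hz'⟩, _, rfl⟩ := hz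
      exact hz'
    -- extend to a walk from u to a avoiding v
    have hwalk : ∃ w2 : T.Walk u a, ∀ z ∈ w2.support, z ∈ D ∪ {a} := by
      rcases hxcase with rfl | hxa
      · exact ⟨w1, fun z hz => Or.inl (hw1supp z hz)⟩
      · refine ⟨w1.concat hxa, ?_⟩
        intro z hz
        rw [SimpleGraph.Walk.support_concat] at hz
        simp only [List.concat_eq_append, List.mem_append, List.mem_singleton] at hz
        rcases hz with hz | hz
        · exact Or.inl (hw1supp z hz)
        · exact Or.inr hz
    obtain ⟨w2, hw2⟩ := hwalk
    -- turn it into a path from a to u, then prepend the edge v-a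
    set q : T.Path a u := w2.reverse.toPath with hq
    have hqsupp : ∀ z ∈ q.1.support, z ∈ D ∪ {a} := by
      intro z hz
      have := SimpleGraph.Walk.support_toPath_subset w2.reverse hz
      rw [SimpleGraph.Walk.support_reverse, List.mem_reverse] at this
      exact hw2 z this
    have hvq : v ∉ q.1.support := by
      intro hmem
      rcases hqsupp v hmem with h | h
      · exact hvD h
      · exact hva.ne (Set.mem_singleton_iff.mp h)
    have hP1 : (SimpleGraph.Walk.cons hva q.1).IsPath :=
      (SimpleGraph.Walk.cons_isPath_iff hva q.1).mpr ⟨q.2, hvq⟩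
    have hP2 : (SimpleGraph.Walk.cons hvu SimpleGraph.Walk.nil).IsPath := by
      rw [SimpleGraph.Walk.cons_isPath_iff]
      refine ⟨SimpleGraph.Walk.IsPath.nil, ?_⟩
      simp [hvu.ne]
    have huniq := hT.existsUnique_path v u
    have heq : SimpleGraph.Walk.cons hva q.1 = SimpleGraph.Walk.cons hvu SimpleGraph.Walk.nil :=
      huniq.unique hP1 hP2
    have hlen := congrArg SimpleGraph.Walk.length heq
    rw [SimpleGraph.Walk.length_cons, SimpleGraph.Walk.length_cons,
      SimpleGraph.Walk.length_nil] at hlen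
    have : a = u := SimpleGraph.Walk.eq_of_length_eq_zero (p := q.1) (by omega)
    exact hau this
  have hval : connDomNum T = D.ncard := by
    unfold connDomNum
    exact hDcard.symm
  have hlb : D₀.ncard ≤ connDomNum T := by
    rw [hval]
    exact Set.ncard_le_ncard hsub (Set.toFinite _)
  have : connDomNum T = D₀.ncard := le_antisymm hub hlb
  omega
end

section
/- A connected graph G on 2n vertices that is a corona has domination number n, and admits a neo-colonization of weight n (so for a tree T that is a corona, γ_m^∞(T) = γ(T) = |V(T)|/2). -/
open scoped Classical

namespace ED

variable {V : Type}

/-- The corona of a graph `H`: add a pendant vertex to each vertex of `H`. -/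
def coronaGraph {W : Type} (H : SimpleGraph W) : SimpleGraph (W ⊕ W) :=
  SimpleGraph.fromRel (fun a b =>
    match a, b with
    | Sum.inl x, Sum.inl y => H.Adj x y
    | Sum.inl x, Sum.inr y => x = y
    | _, _ => False)

/-- `G` is a corona: isomorphic to the corona of some graph. -/
def IsCorona (G : SimpleGraph V) : Prop :=
  ∃ (W : Type) (_ : Fintype W) (H : SimpleGraph W), Nonempty (G ≃g coronaGraph H)

end ED

lemma induce_pair_connected {V : Type} (G : SimpleGraph V) {a b : V} (h : G.Adj a b) :
    (G.induce {a, b}).Connected := by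
  rw [SimpleGraph.connected_iff]
  refine ⟨fun x y => ?_, ⟨⟨a, by simp⟩⟩⟩
  have hx := x.2
  have hy := y.2
  simp only [Set.mem_insert_iff, Set.mem_singleton_iff] at hx hy
  have key : ∀ (u v : ({a, b} : Set V)), (u : V) = a → (v : V) = b → (G.induce {a,b}).Adj u v := by
    intro u v hu hv
    have : G.Adj (u : V) (v : V) := by rw [hu, hv]; exact h
    exact this
  rcases hx with hx | hx <;> rcases hy with hy | hy
  · exact Subtype.ext (hx.trans hy.symm) ▸ SimpleGraph.Reachable.refl _
  · exact (key x y hx hy).reachable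
  · exact ((key y x hy hx).reachable).symm
  · exact Subtype.ext (hx.trans hy.symm) ▸ SimpleGraph.Reachable.refl _

open ED in
/-- A connected graph `G` on `2n` vertices that is a corona has domination number `n`
and admits a neo-colonization of weight `n`. -/
theorem stmt_8 {V : Type} [Fintype V] (G : SimpleGraph V) (n : ℕ)
    (hconn : G.Connected) (hcor : IsCorona G) (hcard : Fintype.card V = 2 * n) :
    domNum G = n ∧
      ∃ P : Finset (Set V), IsNeoColonization G P ∧ neoWeight G P = n := by
  obtain ⟨W, hW, H, ⟨e⟩⟩ := hcor
  haveI := hW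
  -- basic corona adjacency facts
  have hcor1 : ∀ w : W, (coronaGraph H).Adj (Sum.inl w) (Sum.inr w) := by
    intro w; simp [coronaGraph, SimpleGraph.fromRel_adj]
  have hcor2 : ∀ (u : W ⊕ W) (w : W), (coronaGraph H).Adj u (Sum.inr w) → u = Sum.inl w := by
    intro u w h
    cases u with
    | inl x => simp_all [coronaGraph, SimpleGraph.fromRel_adj]
    | inr x => simp_all [coronaGraph, SimpleGraph.fromRel_adj]
  set s : W → V := fun w => e.symm (Sum.inl w) with hs
  set t : W → V := fun w => e.symm (Sum.inr w) with ht
  have hadj : ∀ a b : W ⊕ W, G.Adj (e.symm a) (e.symm b) ↔ (coronaGraph H).Adj a b := by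
    intro a b; exact e.symm.map_rel_iff
  have hst : ∀ w, G.Adj (s w) (t w) := fun w => (hadj _ _).mpr (hcor1 w)
  have hcardW : Fintype.card W = n := by
    have h1 : Fintype.card V = Fintype.card (W ⊕ W) := Fintype.card_congr e.toEquiv
    rw [Fintype.card_sum] at h1
    omega
  have hev : ∀ (v : V) (a : W ⊕ W), e v = a ↔ v = e.symm a := by
    intro v a
    constructor
    · intro h; rw [← h]; simp
    · intro h; rw [h]; simp
  -- injectivity of s
  have hsinj : Function.Injective s := fun w w' h => by
    have := e.symm.injective h
    exact Sum.inl.inj this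
  -- domNum = n
  have hupper : ∃ D : Set V, IsDomSet G D ∧ D.ncard = n := by
    refine ⟨Set.range s, ?_, ?_⟩
    · intro v hv
      rcases hev2 : e v with w | w
      · exact absurd ⟨w, ((hev v _).mp hev2).symm⟩ hv
      · refine ⟨s w, ⟨w, rfl⟩, ?_⟩
        have : v = e.symm (Sum.inr w) := (hev v _).mp hev2
        rw [this]
        exact (hadj _ _).mpr (hcor1 w)
    · rw [← Set.image_univ, Set.ncard_image_of_injective _ hsinj, Set.ncard_univ,
        Nat.card_eq_fintype_card, hcardW]
  have hlower : ∀ m ∈ {m | ∃ D : Set V, IsDomSet G D ∧ D.ncard = m}, n ≤ m := by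
    rintro m ⟨D, hD, rfl⟩
    -- for each w, s w ∈ D or t w ∈ D
    have hpick : ∀ w, s w ∈ D ∨ t w ∈ D := by
      intro w
      by_cases h : t w ∈ D
      · exact Or.inr h
      · obtain ⟨u, hu, hadj'⟩ := hD (t w) h
        left
        have : G.Adj (e.symm (e u)) (e.symm (Sum.inr w)) := by simpa using hadj'
        have h2 : (coronaGraph H).Adj (e u) (Sum.inr w) := (hadj _ _).mp this
        have h3 : e u = Sum.inl w := hcor2 _ _ h2
        have : u = s w := (hev u _).mp h3
        rwa [← this]
    set g : W → V := fun w => if s w ∈ D then s w else t w with hg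
    have hgD : ∀ w, g w ∈ D := by
      intro w
      by_cases h : s w ∈ D
      · simp [hg, h]
      · simp only [hg, if_neg h]
        exact (hpick w).resolve_left h
    have hgmem : ∀ w, e (g w) = Sum.inl w ∨ e (g w) = Sum.inr w := by
      intro w
      by_cases h : s w ∈ D
      · left; simp only [hg, if_pos h]; simp [hs]
      · right; simp [hg, h, ht]
    have hginj : Function.Injective g := by
      intro w w' h
      rcases hgmem w with h1 | h1 <;> rcases hgmem w' with h2 | h2 <;>
        rw [h] at h1 <;> rw [h1] at h2
      · exact Sum.inl.inj h2
      · exact absurd h2 (by simp)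
      · exact absurd h2 (by simp)
      · exact Sum.inr.inj h2
    calc n = (Set.range g).ncard := by
            rw [← Set.image_univ, Set.ncard_image_of_injective _ hginj, Set.ncard_univ,
              Nat.card_eq_fintype_card, hcardW]
      _ ≤ D.ncard := Set.ncard_le_ncard (Set.range_subset_iff.mpr hgD) (Set.toFinite D)
  have hdom : domNum G = n := by
    apply le_antisymm
    · exact Nat.sInf_le hupper
    · exact le_csInf ⟨n, hupper⟩ hlower
  refine ⟨hdom, ?_⟩
  -- neo-colonization
  set S : W → Set V := fun w => {s w, t w} with hS
  have hSclique : ∀ w, G.IsClique (S w) := by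
    intro w
    rw [SimpleGraph.isClique_iff, Set.pairwise_pair]
    exact fun _ => ⟨hst w, (hst w).symm⟩
  have hSmem : ∀ (v : V) (w : W), v ∈ S w ↔ e v = Sum.inl w ∨ e v = Sum.inr w := by
    intro v w
    simp only [hS, Set.mem_insert_iff, Set.mem_singleton_iff]
    rw [hev v (Sum.inl w), hev v (Sum.inr w)]
  have hSinj : Function.Injective S := by
    intro w w' h
    have h1 : s w ∈ S w := by simp [hS]
    rw [h] at h1
    rcases (hSmem _ _).mp h1 with h2 | h2 <;>
      simp only [hs, ht, RelIso.apply_symm_apply] at h2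
    · exact Sum.inl.inj h2
    · exact absurd h2 (by simp)
  refine ⟨Finset.image S Finset.univ, ⟨?_, ?_⟩, ?_⟩
  · rintro T hT
    simp only [Finset.mem_image, Finset.mem_univ, true_and] at hT
    obtain ⟨w, rfl⟩ := hT
    exact induce_pair_connected G (hst w)
  · intro v
    rcases hv : e v with w | w
    · refine ⟨S w, ⟨by simp, (hSmem v w).mpr (Or.inl hv)⟩, ?_⟩
      rintro T ⟨hT, hvT⟩
      simp only [Finset.mem_image, Finset.mem_univ, true_and] at hT
      obtain ⟨w', rfl⟩ := hT
      rcases (hSmem v w').mp hvT with h2 | h2 <;> rw [hv] at h2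
      · exact congrArg S (Sum.inl.inj h2).symm
      · exact absurd h2 (by simp)
    · refine ⟨S w, ⟨by simp, (hSmem v w).mpr (Or.inr hv)⟩, ?_⟩
      rintro T ⟨hT, hvT⟩
      simp only [Finset.mem_image, Finset.mem_univ, true_and] at hT
      obtain ⟨w', rfl⟩ := hT
      rcases (hSmem v w').mp hvT with h2 | h2 <;> rw [hv] at h2
      · exact absurd h2 (by simp)
      · exact congrArg S (Sum.inr.inj h2).symm
  · rw [neoWeight, Finset.sum_image (fun w _ w' _ h => hSinj h)]
    have : ∀ w : W, partWeight G (S w) = 1 := by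
      intro w; rw [partWeight, if_pos (hSclique w)]
    simp only [this, Finset.sum_const, Finset.card_univ, smul_eq_mul, mul_one, hcardW]
end

section
/- For any connected graph G, γ_m^∞(G) ≤ 2γ(G). -/
open scoped Classical

open ED in
/-- For any connected graph `G`, `γ_m^∞(G) ≤ 2γ(G)`. -/
theorem stmt_9 {V : Type} [Fintype V] (G : SimpleGraph V) (hconn : G.Connected) :
    mEternalDomNum G ≤ 2 * domNum G := by
  classical
  have hne : {n | ∃ D : Set V, IsDomSet G D ∧ D.ncard = n}.Nonempty :=
    ⟨(Set.univ : Set V).ncard, Set.univ, fun v hv => absurd (Set.mem_univ v) hv, rfl⟩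
  obtain ⟨D, hD, hDcard⟩ := Nat.sInf_mem hne
  have hdom : ∀ v, v ∉ D → ∃ u, u ∈ D ∧ G.Adj u v := fun v hv => by
    obtain ⟨u, hu, h⟩ := hD v hv; exact ⟨u, hu, h⟩
  let d : V → V := fun v => if h : v ∈ D then v else (hdom v h).choose
  have hdD : ∀ v, d v ∈ D := fun v => by
    by_cases h : v ∈ D
    · simpa [d, h]
    · simpa [d, h] using (hdom v h).choose_spec.1
  have hdAdj : ∀ v, v ∉ D → G.Adj (d v) v := fun v h => by
    simpa [d, h] using (hdom v h).choose_spec.2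
  let D₂ : Set V := {u | ∃ v, v ∉ D ∧ d v = u}
  have hD₂D : D₂ ⊆ D := by rintro u ⟨v, hv, rfl⟩; exact hdD v
  let Sel : (V → V) → Prop := fun e => ∀ u ∈ D₂, e u ∉ D ∧ d (e u) = u
  let F : Set (Set V) := {C | ∃ e, Sel e ∧ C = D ∪ e '' D₂}
  set k := D.ncard + D₂.ncard with hk
  have hinj : ∀ e, Sel e → Set.InjOn e D₂ := by
    intro e he a ha b hb hab
    have h1 := (he a ha).2; have h2 := (he b hb).2
    rw [← h1, ← h2, hab]
  have hcard : ∀ e, Sel e → (D ∪ e '' D₂).ncard = k := by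
    intro e he
    have hdisj : Disjoint D (e '' D₂) := by
      rw [Set.disjoint_right]
      rintro x ⟨u, hu, rfl⟩
      exact (he u hu).1
    rw [Set.ncard_union_eq hdisj, Set.ncard_image_of_injOn (hinj e he)]
  have hcan : CanDefendAllMove G k := by
    refine ⟨F, ?_, ?_, ?_⟩
    · have hch : ∀ u ∈ D₂, ∃ v, v ∉ D ∧ d v = u := fun u hu => hu
      refine ⟨D ∪ (fun u => if h : u ∈ D₂ then (hch u h).choose else u) '' D₂,
        (fun u => if h : u ∈ D₂ then (hch u h).choose else u), ?_, rfl⟩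
      intro u hu
      simpa [hu] using (hch u hu).choose_spec
    · rintro C ⟨e, he, rfl⟩
      refine ⟨?_, hcard e he⟩
      intro v hv
      have hvD : v ∉ D := fun h => hv (Or.inl h)
      exact ⟨d v, Or.inl (hdD v), hdAdj v hvD⟩
    · rintro C ⟨e, he, rfl⟩ r hr
      have hrD : r ∉ D := fun h => hr (Or.inl h)
      have hrI : r ∉ e '' D₂ := fun h => hr (Or.inr h)
      set u := d r with hu
      have huD : u ∈ D := hdD r
      have huD₂ : u ∈ D₂ := ⟨r, hrD, rfl⟩
      have heu := he u huD₂
      have hru : r ≠ u := fun h => hrD (by rw [h]; exact huD)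
      have heuu : e u ≠ u := fun h => heu.1 (by rw [h]; exact huD)
      have heur : e u ≠ r := fun h => hrI (by rw [← h]; exact ⟨u, huD₂, rfl⟩)
      let e' := Function.update e u r
      have he'u : e' u = r := Function.update_self u r e
      have he' : Sel e' := by
        intro w hw
        by_cases hwu : w = u
        · subst hwu; rw [he'u]; exact ⟨hrD, hu.symm⟩
        · rw [show e' w = e w from Function.update_of_ne hwu r e]; exact he w hw
      refine ⟨D ∪ e' '' D₂, ⟨e', he', rfl⟩, Or.inr ⟨u, huD₂, he'u⟩, ?_⟩
      have himg : e' '' D₂ = insert r (e '' D₂ \ {e u}) := by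
        ext x
        constructor
        · rintro ⟨w, hw, rfl⟩
          by_cases hwu : w = u
          · subst hwu; rw [he'u]; exact Set.mem_insert _ _
          · rw [show e' w = e w from Function.update_of_ne hwu r e]
            refine Set.mem_insert_of_mem _ ⟨⟨w, hw, rfl⟩, ?_⟩
            simp only [Set.mem_singleton_iff]
            exact fun h => hwu (hinj e he hw huD₂ h)
        · rintro (rfl | ⟨⟨w, hw, rfl⟩, hx⟩)
          · exact ⟨u, huD₂, he'u⟩
          · have hwu : w ≠ u := fun h => hx (by rw [h]; exact rfl)
            exact ⟨w, hw, Function.update_of_ne hwu r e⟩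
      have hC' : D ∪ e' '' D₂ = insert r ((D ∪ e '' D₂) \ {e u}) := by
        rw [himg]
        ext x
        simp only [Set.mem_union, Set.mem_insert_iff, Set.mem_diff, Set.mem_singleton_iff]
        constructor
        · rintro (hx | rfl | ⟨hx, hx2⟩)
          · exact Or.inr ⟨Or.inl hx, fun h => heu.1 (h ▸ hx)⟩
          · exact Or.inl rfl
          · exact Or.inr ⟨Or.inr hx, hx2⟩
        · rintro (rfl | ⟨hx | hx, hx2⟩)
          · exact Or.inr (Or.inl rfl)
          · exact Or.inl hx
          · exact Or.inr (Or.inr ⟨hx, hx2⟩)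
      set f : V → V := fun v => if v = u then r else if v = e u then u else v with hf
      have hfu : f u = r := by rw [hf]; simp
      have hfeu : f (e u) = u := by rw [hf]; simp [heuu]
      have hfo : ∀ v, v ≠ u → v ≠ e u → f v = v := by
        intro v h1 h2; rw [hf]; simp [h1, h2]
      refine ⟨f, ?_, ?_⟩
      · rw [hC']
        refine ⟨?_, ?_, ?_⟩
        · -- MapsTo
          intro v hv
          by_cases h1 : v = u
          · subst h1; rw [hfu]; exact Set.mem_insert _ _
          · by_cases h2 : v = e u
            · subst h2; rw [hfeu]
              exact Set.mem_insert_of_mem _ ⟨Or.inl huD, fun h => heuu h.symm⟩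
            · rw [hfo v h1 h2]
              exact Set.mem_insert_of_mem _ ⟨hv, h2⟩
        · -- InjOn
          intro a ha b hb hab
          by_cases ha1 : a = u <;> by_cases hb1 : b = u
          · rw [ha1, hb1]
          · subst ha1; rw [hfu] at hab
            by_cases hb2 : b = e u
            · subst hb2; rw [hfeu] at hab; exact absurd hab hru
            · rw [hfo b hb1 hb2] at hab
              rw [← hab] at hb; exact absurd hb hr
          · subst hb1; rw [hfu] at hab
            by_cases ha2 : a = e u
            · subst ha2; rw [hfeu] at hab; exact absurd hab.symm hru
            · rw [hfo a ha1 ha2] at hab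
              rw [hab] at ha; exact absurd ha hr
          · by_cases ha2 : a = e u <;> by_cases hb2 : b = e u
            · rw [ha2, hb2]
            · subst ha2; rw [hfeu, hfo b hb1 hb2] at hab; exact absurd hab.symm hb1
            · subst hb2; rw [hfeu, hfo a ha1 ha2] at hab; exact absurd hab ha1
            · rwa [hfo a ha1 ha2, hfo b hb1 hb2] at hab
        · -- SurjOn
          intro x hx
          rcases hx with rfl | ⟨hx1, hx2⟩
          · exact ⟨u, Or.inl huD, hfu⟩
          · by_cases h1 : x = u
            · subst h1; exact ⟨e u, Or.inr ⟨u, huD₂, rfl⟩, hfeu⟩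
            · exact ⟨x, hx1, hfo x h1 hx2⟩
      · intro v hv
        by_cases h1 : v = u
        · subst h1; rw [hfu]
          exact Or.inr (hdAdj r hrD)
        · by_cases h2 : v = e u
          · subst h2; rw [hfeu]
            have h := hdAdj (e u) heu.1
            rw [heu.2] at h
            exact Or.inr h.symm
          · rw [hfo v h1 h2]; exact Or.inl rfl
  have h1 : mEternalDomNum G ≤ k := Nat.sInf_le hcan
  have h2 : k ≤ 2 * domNum G := by
    have hle := Set.ncard_le_ncard hD₂D D.toFinite
    have hd2 : D.ncard = domNum G := hDcard
    omega
  omega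
end

section
/- If T is a tree with γ_m^∞(T) = 2γ(T), then every minimum dominating set of T is an independent set. -/
open scoped Classical

namespace EDAux

open ED

variable {V : Type}

/-- Two-guard shift: guard at `a` moves to `r`, guard at `b` moves to `a`. -/
lemma shift2 {C : Set V} {a b r : V} (ha : a ∈ C) (hb : b ∈ C) (hab : b ≠ a) (hr : r ∉ C) :
    Set.BijOn (fun z => if z = a then r else if z = b then a else z) C (insert r (C \ {b})) := by
  classical
  have hinv : ∀ z ∈ C, (fun y => if y = r then a else if y = a then b else y)
      ((fun z => if z = a then r else if z = b then a else z) z) = z := by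
    intro z hz
    by_cases h1 : z = a
    · simp [h1]
    · by_cases h2 : z = b
      · subst h2
        have har : a ≠ r := fun h => hr (h ▸ ha)
        simp [h1, har]
      · have hzr : z ≠ r := fun h => hr (h ▸ hz)
        simp [h1, h2, hzr]
  refine ⟨?_, ?_, ?_⟩
  · intro z hz
    by_cases h1 : z = a
    · simp [h1]
    · by_cases h2 : z = b
      · subst h2
        simp only [if_neg h1, if_pos rfl]
        exact Set.mem_insert_iff.mpr (Or.inr ⟨ha, fun h => hab h.symm⟩)
      · simp only [if_neg h1, if_neg h2]
        exact Set.mem_insert_iff.mpr (Or.inr ⟨hz, h2⟩)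
  · intro x hx y hy hxy
    rw [← hinv x hx, ← hinv y hy, hxy]
  · intro y hy
    rcases Set.mem_insert_iff.mp hy with rfl | ⟨hyC, hyb⟩
    · exact ⟨a, ha, by simp⟩
    · have hyb' : y ≠ b := by simpa using hyb
      by_cases hya : y = a
      · subst hya
        exact ⟨b, hb, by simp [hab]⟩
      · exact ⟨y, hyC, by simp [hya, hyb']⟩

/-- Three-guard shift: `a ↦ r`, `b ↦ a`, `c ↦ b`. -/
lemma shift3 {C : Set V} {a b c r : V} (ha : a ∈ C) (hb : b ∈ C) (hc : c ∈ C)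
    (hab : a ≠ b) (hca : c ≠ a) (hcb : c ≠ b) (hr : r ∉ C) :
    Set.BijOn (fun z => if z = a then r else if z = b then a else if z = c then b else z)
      C (insert r (C \ {c})) := by
  classical
  have hinv : ∀ z ∈ C, (fun y => if y = r then a else if y = a then b else if y = b then c else y)
      ((fun z => if z = a then r else if z = b then a else if z = c then b else z) z) = z := by
    intro z hz
    by_cases h1 : z = a
    · simp [h1]
    · by_cases h2 : z = b
      · subst h2
        have har : a ≠ r := fun h => hr (h ▸ ha)
        simp [h1, har, hab.symm]
      · by_cases h3 : z = c
        · subst h3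
          have hbr : b ≠ r := fun h => hr (h ▸ hb)
          simp [h1, h2, hbr, hab.symm]
        · have hzr : z ≠ r := fun h => hr (h ▸ hz)
          simp [h1, h2, h3, hzr]
  refine ⟨?_, ?_, ?_⟩
  · intro z hz
    by_cases h1 : z = a
    · simp [h1]
    · by_cases h2 : z = b
      · subst h2
        simp only [if_neg h1, if_pos rfl]
        exact Set.mem_insert_iff.mpr (Or.inr ⟨ha, fun h => hca h.symm⟩)
      · by_cases h3 : z = c
        · subst h3
          simp only [if_neg h1, if_neg h2, if_pos rfl]
          exact Set.mem_insert_iff.mpr (Or.inr ⟨hb, fun h => hcb (by simpa using h.symm)⟩)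
        · simp only [if_neg h1, if_neg h2, if_neg h3]
          exact Set.mem_insert_iff.mpr (Or.inr ⟨hz, h3⟩)
  · intro x hx y hy hxy
    rw [← hinv x hx, ← hinv y hy, hxy]
  · intro y hy
    rcases Set.mem_insert_iff.mp hy with rfl | ⟨hyC, hyc⟩
    · exact ⟨a, ha, by simp⟩
    · have hyc' : y ≠ c := by simpa using hyc
      by_cases hya : y = a
      · subst hya
        exact ⟨b, hb, by simp [hab.symm, hab]⟩
      · by_cases hyb : y = b
        · subst hyb
          exact ⟨c, hc, by simp [hca, hcb]⟩
        · exact ⟨y, hyC, by simp [hya, hyb, hyc']⟩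


variable {T : SimpleGraph V} {D : Set V} {u v : V} {g : V → V}

/-- Invariant for guard configurations: `g` assigns to each vertex of `D \\ {v}` a
"floating guard" position. -/
def GoodCfg (T : SimpleGraph V) (D : Set V) (u v : V) (g : V → V) : Prop :=
  Set.InjOn g (D \ {v}) ∧
  (∀ w ∈ D \ {v}, w ≠ u → T.Adj w (g w) ∧ g w ∉ D) ∧
  ((T.Adj u (g u) ∨ T.Adj v (g u)) ∧ g u ∉ D)

/-- The guard configuration associated to `g`. -/
def Cfg (D : Set V) (v : V) (g : V → V) : Set V := D ∪ g '' (D \ {v})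

lemma GoodCfg.img_not_mem (hg : GoodCfg T D u v g) (hu : u ∈ D) :
    ∀ x ∈ D \ {v}, g x ∉ D := by
  intro x hx
  by_cases hxu : x = u
  · subst hxu; exact hg.2.2.2
  · exact (hg.2.1 x hx hxu).2

lemma GoodCfg.disj (hg : GoodCfg T D u v g) (hu : u ∈ D) :
    Disjoint D (g '' (D \ {v})) := by
  rw [Set.disjoint_right]
  rintro x ⟨y, hy, rfl⟩
  exact hg.img_not_mem hu y hy

lemma cfg_ncard [Fintype V] (hg : GoodCfg T D u v g) (hu : u ∈ D) (hv : v ∈ D) :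
    (Cfg D v g).ncard = D.ncard + (D.ncard - 1) := by
  rw [Cfg, Set.ncard_union_eq (hg.disj hu) (Set.toFinite _) (Set.toFinite _),
    Set.ncard_image_of_injOn hg.1, Set.ncard_diff_singleton_of_mem hv]

lemma cfg_update (hg : GoodCfg T D u v g) (hu : u ∈ D) {w r : V} (hw : w ∈ D \ {v})
    (hr : r ∉ Cfg D v g) :
    Cfg D v (Function.update g w r) = insert r (Cfg D v g \ {g w}) := by
  classical
  have hgwD : g w ∉ D := hg.img_not_mem hu w hw
  have himg : Function.update g w r '' (D \ {v}) = insert r (g '' ((D \ {v}) \ {w})) := by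
    ext y
    constructor
    · rintro ⟨x, hx, rfl⟩
      by_cases hxw : x = w
      · subst hxw; simp
      · rw [Function.update_of_ne hxw]
        exact Set.mem_insert_iff.mpr (Or.inr ⟨x, ⟨hx, by simp [hxw]⟩, rfl⟩)
    · intro hy
      rcases Set.mem_insert_iff.mp hy with rfl | ⟨x, hx, rfl⟩
      · exact ⟨w, hw, Function.update_self _ _ _⟩
      · exact ⟨x, hx.1, by rw [Function.update_of_ne (by simpa using hx.2)]⟩
  have himg2 : g '' ((D \ {v}) \ {w}) = (g '' (D \ {v})) \ {g w} := by
    ext y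
    constructor
    · rintro ⟨x, hx, rfl⟩
      refine ⟨⟨x, hx.1, rfl⟩, ?_⟩
      simp only [Set.mem_singleton_iff]
      intro hgx
      exact (by simpa using hx.2 : x ≠ w) (hg.1 hx.1 hw hgx)
    · rintro ⟨⟨x, hx, rfl⟩, hne'⟩
      refine ⟨x, ⟨hx, ?_⟩, rfl⟩
      simp only [Set.mem_singleton_iff]
      rintro rfl
      exact hne' rfl
  rw [Cfg, Cfg, himg, himg2, Set.insert_eq, Set.insert_eq, Set.union_diff_distrib,
    Set.diff_singleton_eq_self hgwD, Set.union_left_comm]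

lemma good_update (hg : GoodCfg T D u v g) (hu : u ∈ D) {w r : V} (hw : w ∈ D \ {v})
    (hr : r ∉ Cfg D v g)
    (hc : w = u → (T.Adj u r ∨ T.Adj v r)) (hc2 : w ≠ u → T.Adj w r) :
    GoodCfg T D u v (Function.update g w r) := by
  classical
  have hrI : ∀ x ∈ D \ {v}, r ≠ g x := fun x hx h => hr (Or.inr ⟨x, hx, h.symm⟩)
  have hrD : r ∉ D := fun h => hr (Or.inl h)
  refine ⟨?_, ?_, ?_⟩
  · intro x hx y hy hxy
    by_cases hxw : x = w
    · by_cases hyw : y = w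
      · rw [hxw, hyw]
      · subst hxw
        rw [Function.update_self, Function.update_of_ne hyw] at hxy
        exact absurd hxy (hrI y hy)
    · by_cases hyw : y = w
      · subst hyw
        rw [Function.update_self, Function.update_of_ne hxw] at hxy
        exact absurd hxy.symm (hrI x hx)
      · rw [Function.update_of_ne hxw, Function.update_of_ne hyw] at hxy
        exact hg.1 hx hy hxy
  · intro x hx hxu
    by_cases hxw : x = w
    · subst hxw
      rw [Function.update_self]
      exact ⟨hc2 hxu, hrD⟩
    · rw [Function.update_of_ne hxw]
      exact hg.2.1 x hx hxu
  · by_cases huw : u = w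
    · subst huw
      rw [Function.update_self]
      exact ⟨hc rfl, hrD⟩
    · rw [Function.update_of_ne huw]
      exact hg.2.2

lemma defend {V : Type} [Fintype V] (T : SimpleGraph V) (hconn : T.Connected)
    (D : Set V) (hDdom : IsDomSet T D) (hDcard : D.ncard = domNum T)
    (u v : V) (hu : u ∈ D) (hv : v ∈ D) (hne : u ≠ v) (hadj : T.Adj u v) :
    CanDefendAllMove T (2 * domNum T - 1) := by
  classical
  have L0 : ∀ E : Set V, IsDomSet T E → domNum T ≤ E.ncard :=
    fun E hE => Nat.sInf_le ⟨E, hE, rfl⟩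
  have Lnbr : ∀ w : V, ∃ x, T.Adj w x := by
    intro w
    have hz : ∃ z, z ≠ w := by
      rcases eq_or_ne w u with rfl | h
      · exact ⟨v, hne.symm⟩
      · exact ⟨u, h.symm⟩
    obtain ⟨z, hz⟩ := hz
    obtain ⟨p⟩ := hconn.preconnected w z
    cases p with
    | nil => exact absurd rfl hz
    | cons h q => exact ⟨_, h⟩
  have L1 : ∀ w ∈ D, ∃ x, T.Adj w x ∧ x ∉ D := by
    intro w hw
    by_contra hcon
    push_neg at hcon
    have hdom' : IsDomSet T (D \ {w}) := by
      intro z hz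
      by_cases hzw : z = w
      · subst hzw
        obtain ⟨x, hx⟩ := Lnbr z
        exact ⟨x, ⟨hcon x hx, by simp [hx.ne']⟩, hx.symm⟩
      · have hzD : z ∉ D := fun hzD => hz ⟨hzD, by simp [hzw]⟩
        obtain ⟨d, hdD, hdz⟩ := hDdom z hzD
        have hdw : d ≠ w := by rintro rfl; exact hzD (hcon z hdz)
        exact ⟨d, ⟨hdD, by simp [hdw]⟩, hdz⟩
    have h1 := L0 _ hdom'
    have h2 : (D \ {w}).ncard < D.ncard :=
      Set.ncard_diff_singleton_lt_of_mem hw (Set.toFinite D)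
    omega
  -- Hall's theorem: choose initial distinct floating guards
  let A : V → Set V := fun w =>
    if w = u then ((T.neighborSet u ∪ T.neighborSet v) \ D) else (T.neighborSet w \ D)
  let t : {w : V // w ∈ D ∧ w ≠ v} → Finset V := fun w => Finset.univ.filter (· ∈ A w.1)
  have hmemt : ∀ (w : {w : V // w ∈ D ∧ w ≠ v}) (x : V), x ∈ t w ↔ x ∈ A w.1 := by
    intro w x; simp [t]
  have hAD : ∀ w x, x ∈ A w → x ∉ D := by
    intro w x hx
    by_cases h : w = u <;> simp only [A, if_pos, if_neg, h, if_true, if_false] at hx <;>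
      exact hx.2
  have hHall : ∀ s : Finset {w : V // w ∈ D ∧ w ≠ v}, s.card ≤ (s.biUnion t).card := by
    intro s
    by_contra hcard
    push_neg at hcard
    set S : Finset V := s.image (fun w => w.1) with hS
    set Z : Finset V := s.biUnion t with hZ
    have hScard : S.card = s.card := Finset.card_image_of_injective s Subtype.val_injective
    have hSsub : (↑S : Set V) ⊆ D := by
      intro x hx
      simp only [hS, Finset.coe_image, Set.mem_image, Finset.mem_coe] at hx
      obtain ⟨w, _, rfl⟩ := hx
      exact w.2.1
    have hvS : v ∉ (↑S : Set V) := by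
      intro hx
      simp only [hS, Finset.coe_image, Set.mem_image, Finset.mem_coe] at hx
      obtain ⟨w, _, hw⟩ := hx
      exact w.2.2 hw
    have hidx : ∀ x ∈ (↑S : Set V), ∃ w, w ∈ s ∧ Subtype.val w = x := by
      intro x hx
      simp only [hS, Finset.coe_image, Set.mem_image, Finset.mem_coe] at hx
      obtain ⟨w, hw, rfl⟩ := hx
      exact ⟨w, hw, rfl⟩
    have hZmem : ∀ w, w ∈ s → ∀ x, x ∈ A w.1 → x ∈ (↑Z : Set V) := by
      intro w hw x hx
      simp only [hZ, Finset.coe_biUnion, Set.mem_iUnion, Finset.mem_coe]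
      exact ⟨w, hw, (hmemt w x).mpr hx⟩
    have hD'dom : IsDomSet T ((D \ ↑S) ∪ ↑Z) := by
      intro z hz
      by_cases hzD : z ∈ D
      · by_cases hzS : z ∈ (↑S : Set V)
        · obtain ⟨w, hws, hwz⟩ := hidx z hzS
          by_cases hzu : z = u
          · subst hzu
            exact ⟨v, Or.inl ⟨hv, hvS⟩, hadj.symm⟩
          · obtain ⟨x, hxadj, hxD⟩ := L1 z hzD
            have hxA : x ∈ A z := by
              simp only [A, if_neg hzu]
              exact ⟨hxadj, hxD⟩
            exact ⟨x, Or.inr (hZmem w hws x (by rw [hwz]; exact hxA)), hxadj.symm⟩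
        · exact absurd (Or.inl ⟨hzD, hzS⟩) hz
      · obtain ⟨d, hdD, hdz⟩ := hDdom z hzD
        by_cases hdS : d ∈ (↑S : Set V)
        · obtain ⟨w, hws, hwd⟩ := hidx d hdS
          have hzA : z ∈ A d := by
            by_cases hdu : d = u
            · subst hdu
              simp only [A, if_pos rfl]
              exact ⟨Or.inl hdz, hzD⟩
            · simp only [A, if_neg hdu]
              exact ⟨hdz, hzD⟩
          exact absurd (Or.inr (hZmem w hws z (by rw [hwd]; exact hzA))) hz
        · exact ⟨d, Or.inl ⟨hdD, hdS⟩, hdz⟩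
    have hcard2 := L0 _ hD'dom
    have hle1 : ((D \ ↑S) ∪ ↑Z).ncard ≤ (D \ ↑S).ncard + Z.card := by
      calc ((D \ ↑S) ∪ ↑Z).ncard ≤ (D \ ↑S).ncard + (↑Z : Set V).ncard :=
            Set.ncard_union_le _ _
        _ = (D \ ↑S).ncard + Z.card := by rw [Set.ncard_coe_finset]
    have hdiff : (D \ ↑S).ncard = D.ncard - S.card := by
      rw [Set.ncard_diff hSsub (Set.toFinite _), Set.ncard_coe_finset]
    have hSle : S.card ≤ D.ncard := by
      have := Set.ncard_le_ncard hSsub (Set.toFinite D)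
      rwa [Set.ncard_coe_finset] at this
    omega
  obtain ⟨f, hfinj, hft⟩ := (Finset.all_card_le_biUnion_card_iff_exists_injective t).mp hHall
  set g₀ : V → V := fun x => if h : x ∈ D ∧ x ≠ v then f ⟨x, h⟩ else x with hg₀
  have hg₀mem : ∀ x (h : x ∈ D ∧ x ≠ v), g₀ x = f ⟨x, h⟩ := by
    intro x h; simp only [hg₀, dif_pos h]
  have hmem' : ∀ {x : V}, x ∈ D \ {v} → x ∈ D ∧ x ≠ v := by
    intro x hx; simpa using hx
  have hGood₀ : GoodCfg T D u v g₀ := by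
    refine ⟨?_, ?_, ?_⟩
    · intro x hx y hy hxy
      have hx' := hmem' hx
      have hy' := hmem' hy
      rw [hg₀mem x hx', hg₀mem y hy'] at hxy
      have := hfinj hxy
      exact congrArg Subtype.val this
    · intro w hw hwu
      have hw' := hmem' hw
      have hA := (hmemt ⟨w, hw'⟩ _).mp (hft ⟨w, hw'⟩)
      rw [hg₀mem w hw']
      simp only [A, if_neg hwu] at hA
      exact ⟨hA.1, hA.2⟩
    · have hu' : u ∈ D ∧ u ≠ v := ⟨hu, hne⟩
      have hA := (hmemt ⟨u, hu'⟩ _).mp (hft ⟨u, hu'⟩)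
      rw [hg₀mem u hu']
      simp only [A, if_pos rfl] at hA
      refine ⟨?_, hA.2⟩
      rcases hA.1 with h | h
      · exact Or.inl h
      · exact Or.inr h
  -- the family of configurations
  refine ⟨{C | ∃ g, GoodCfg T D u v g ∧ C = Cfg D v g},
    ⟨Cfg D v g₀, g₀, hGood₀, rfl⟩, ?_, ?_⟩
  · rintro C ⟨g, hg, rfl⟩
    constructor
    · intro z hz
      have hzD : z ∉ D := fun h => hz (Or.inl h)
      obtain ⟨d, hdD, hdz⟩ := hDdom z hzD
      exact ⟨d, Or.inl hdD, hdz⟩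
    · rw [cfg_ncard hg hu hv, hDcard]
      have h2 : 2 ≤ domNum T := by
        rw [← hDcard]
        exact (Set.one_lt_ncard (Set.toFinite D)).mpr ⟨u, hu, v, hv, hne⟩
      omega
  · rintro C ⟨g, hg, rfl⟩ r hr
    have hrD : r ∉ D := fun h => hr (Or.inl h)
    obtain ⟨w0, hw0D, hw0r⟩ := hDdom r hrD
    have huD' : u ∈ D \ {v} := ⟨hu, by simp [hne]⟩
    have hguC : g u ∈ Cfg D v g := Or.inr ⟨u, huD', rfl⟩
    have hguD : g u ∉ D := hg.2.2.2
    by_cases hplain : ∃ w', w' ∈ D ∧ w' ≠ u ∧ w' ≠ v ∧ T.Adj w' r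
    · obtain ⟨w', hw'D, hw'u, hw'v, hw'r⟩ := hplain
      have hw'mem : w' ∈ D \ {v} := ⟨hw'D, by simp [hw'v]⟩
      have hgood' := good_update hg hu hw'mem hr (fun h => absurd h hw'u) (fun _ => hw'r)
      refine ⟨Cfg D v (Function.update g w' r), ⟨_, hgood', rfl⟩, ?_, ?_⟩
      · rw [cfg_update hg hu hw'mem hr]; exact Set.mem_insert r _
      · rw [cfg_update hg hu hw'mem hr]
        have hw'C : w' ∈ Cfg D v g := Or.inl hw'D
        have hgw'C : g w' ∈ Cfg D v g := Or.inr ⟨w', hw'mem, rfl⟩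
        have hgw'ne : g w' ≠ w' := fun h => (hg.img_not_mem hu w' hw'mem) (by rw [h]; exact hw'D)
        refine ⟨_, shift2 hw'C hgw'C hgw'ne hr, ?_⟩
        intro z hz
        by_cases h1 : z = w'
        · subst h1
          right
          simp only [if_pos rfl]
          exact hw'r
        · by_cases h2 : z = g w'
          · subst h2
            right
            simp only [if_neg h1, if_pos rfl]
            exact ((hg.2.1 w' hw'mem hw'u).1).symm
          · left
            simp only [if_neg h1, if_neg h2]
    · have huvr : T.Adj u r ∨ T.Adj v r := by
        by_cases h1 : w0 = u
        · exact Or.inl (h1 ▸ hw0r)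
        · by_cases h2 : w0 = v
          · exact Or.inr (h2 ▸ hw0r)
          · exact absurd ⟨w0, hw0D, h1, h2, hw0r⟩ hplain
      have hgood' := good_update hg hu huD' hr (fun _ => huvr) (fun h => absurd rfl h)
      refine ⟨Cfg D v (Function.update g u r), ⟨_, hgood', rfl⟩, ?_, ?_⟩
      · rw [cfg_update hg hu huD' hr]; exact Set.mem_insert r _
      · rw [cfg_update hg hu huD' hr]
        have huC : u ∈ Cfg D v g := Or.inl hu
        have hvC : v ∈ Cfg D v g := Or.inl hv
        have hgu_ne_u : g u ≠ u := fun h => hguD (by rw [h]; exact hu)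
        have hgu_ne_v : g u ≠ v := fun h => hguD (by rw [h]; exact hv)
        by_cases hur : T.Adj u r
        · by_cases hugu : T.Adj u (g u)
          · refine ⟨_, shift2 huC hguC hgu_ne_u hr, ?_⟩
            intro z hz
            by_cases h1 : z = u
            · subst h1; right; simp only [if_pos rfl]; exact hur
            · by_cases h2 : z = g u
              · subst h2; right; simp only [if_neg h1, if_pos rfl]; exact hugu.symm
              · left; simp only [if_neg h1, if_neg h2]
          · have hvgu : T.Adj v (g u) := hg.2.2.1.resolve_left hugu
            refine ⟨_, shift3 huC hvC hguC hne hgu_ne_u hgu_ne_v hr, ?_⟩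
            intro z hz
            by_cases h1 : z = u
            · subst h1; right; simp only [if_pos rfl]; exact hur
            · by_cases h2 : z = v
              · subst h2; right; simp only [if_neg h1, if_pos rfl]; exact hadj.symm
              · by_cases h3 : z = g u
                · subst h3; right; simp only [if_neg h1, if_neg h2, if_pos rfl]
                  exact hvgu.symm
                · left; simp only [if_neg h1, if_neg h2, if_neg h3]
        · have hvr : T.Adj v r := huvr.resolve_left hur
          by_cases hvgu : T.Adj v (g u)
          · refine ⟨_, shift2 hvC hguC hgu_ne_v hr, ?_⟩
            intro z hz
            by_cases h1 : z = v
            · subst h1; right; simp only [if_pos rfl]; exact hvr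
            · by_cases h2 : z = g u
              · subst h2; right; simp only [if_neg h1, if_pos rfl]; exact hvgu.symm
              · left; simp only [if_neg h1, if_neg h2]
          · have hugu : T.Adj u (g u) := hg.2.2.1.resolve_right hvgu
            refine ⟨_, shift3 hvC huC hguC hne.symm hgu_ne_v hgu_ne_u hr, ?_⟩
            intro z hz
            by_cases h1 : z = v
            · subst h1; right; simp only [if_pos rfl]; exact hvr
            · by_cases h2 : z = u
              · subst h2; right; simp only [if_neg h1, if_pos rfl]; exact hadj
              · by_cases h3 : z = g u
                · subst h3; right; simp only [if_neg h1, if_neg h2, if_pos rfl]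
                  exact hugu.symm
                · left; simp only [if_neg h1, if_neg h2, if_neg h3]

end EDAux

open ED in
/-- If `T` is a tree with `γ_m^∞(T) = 2γ(T)`, then every minimum dominating set of `T`
is an independent set. -/
theorem stmt_10 {V : Type} [Fintype V] (T : SimpleGraph V) (hT : T.IsTree)
    (h : mEternalDomNum T = 2 * domNum T) :
    ∀ D : Set V, IsDomSet T D → D.ncard = domNum T →
      D.Pairwise (fun u v => ¬ T.Adj u v) := by
  classical
  intro D hDdom hDcard
  intro u hu v hv hne hadj
  exfalso
  have hdef := EDAux.defend T hT.isConnected D hDdom hDcard u v hu hv hne hadj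
  have hle : mEternalDomNum T ≤ 2 * domNum T - 1 := Nat.sInf_le hdef
  have h2 : 2 ≤ domNum T := by
    rw [← hDcard]
    exact (Set.one_lt_ncard (Set.toFinite D)).mpr ⟨u, hu, v, hv, hne⟩
  omega
end

section
/- If T is a tree with γ_m^∞(T) = 2γ(T) and D is a minimum dominating set of T, then every vertex x ∈ D has at least two external private neighbors with respect to D. -/
open scoped Classical

namespace ED

variable {V : Type}

/-- The set of external private neighbors of `x` with respect to `D`. -/
def epnSet (G : SimpleGraph V) (D : Set V) (x : V) : Set V :=
  {v | v ∉ D ∧ G.Adj x v ∧ ∀ y ∈ D, y ≠ x → ¬ G.Adj y v}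

end ED


open ED

section Helpers
set_option linter.unusedSectionVars false
set_option maxHeartbeats 1000000
variable {V : Type} [Fintype V] {T : SimpleGraph V}

lemma domNum_le {D : Set V} (h : IsDomSet T D) : domNum T ≤ D.ncard :=
  Nat.sInf_le ⟨D, h, rfl⟩

lemma exists_adj_of_ne (hcon : T.Connected) {a b : V} (hab : a ≠ b) : ∃ u, T.Adj a u := by
  obtain ⟨w⟩ := hcon a b
  cases w with
  | nil => exact absurd rfl hab
  | cons h _ => exact ⟨_, h⟩

lemma no_adj_of_epn_empty {D : Set V} (hD : IsDomSet T D) (hmin : D.ncard = domNum T)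
    {y : V} (hy : y ∈ D) (he : epnSet T D y = ∅) : ∀ u ∈ D, ¬ T.Adj u y := by
  have hnd : ¬ IsDomSet T (D \ {y}) := by
    intro hdom
    have h1 : domNum T ≤ (D \ {y}).ncard := domNum_le hdom
    have h2 : (D \ {y}).ncard = D.ncard - 1 := Set.ncard_diff_singleton_of_mem hy
    have h3 : 1 ≤ D.ncard := (Set.ncard_pos (Set.toFinite D)).2 ⟨y, hy⟩
    omega
  rw [IsDomSet] at hnd
  push_neg at hnd
  obtain ⟨v, hv, hvp⟩ := hnd
  by_cases hvy : v = y
  · subst hvy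
    intro u hu hadj
    rcases eq_or_ne u v with rfl | hne
    · exact T.irrefl hadj
    · exact hvp u ⟨hu, hne⟩ hadj
  · exfalso
    have hvD : v ∉ D := fun h => hv ⟨h, hvy⟩
    obtain ⟨u, hu, hadj⟩ := hD v hvD
    have huy : u = y := by
      by_contra hne
      exact hvp u ⟨hu, hne⟩ hadj
    subst huy
    have : v ∈ epnSet T D u := ⟨hvD, hadj, fun z hz hzn hza => hvp z ⟨hz, hzn⟩ hza⟩
    rw [he] at this
    exact this

lemma exists_spare (hcon : T.Connected) {D : Set V} (hD : IsDomSet T D)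
    (hmin : D.ncard = domNum T) {x0 : V} (hx0 : x0 ∈ D) :
    ∃ s : V → V, Set.InjOn s (D \ {x0}) ∧ ∀ y ∈ D \ {x0}, T.Adj y (s y) ∧ s y ∉ D := by
  classical
  let ι := {y : V // y ∈ D ∧ y ≠ x0}
  let t : ι → Finset V := fun y =>
    if h : (epnSet T D y.1).Nonempty then {h.choose} else (T.neighborSet y.1 \ D).toFinset
  have ht : ∀ (y : ι), ∀ v ∈ t y, T.Adj y.1 v ∧ v ∉ D := by
    intro y v hv
    by_cases h : (epnSet T D y.1).Nonempty
    · simp only [t, dif_pos h, Finset.mem_singleton] at hv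
      subst hv
      obtain ⟨h1, h2, _⟩ := h.choose_spec
      exact ⟨h2, h1⟩
    · simp only [t, dif_neg h, Set.mem_toFinset, Set.mem_diff, SimpleGraph.mem_neighborSet] at hv
      exact hv
  -- exchange argument for epn-less vertices
  have key : ∀ s : Finset ι, (∀ y ∈ s, ¬ (epnSet T D y.1).Nonempty) →
      s.card ≤ (s.biUnion t).card := by
    intro s hs
    by_contra hlt
    push_neg at hlt
    set U : Finset V := s.biUnion t with hU
    set W : Set V := (fun (y : ι) => y.1) '' ↑s with hW
    have hWD : W ⊆ D := by rintro _ ⟨y, _, rfl⟩; exact y.2.1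
    have hWcard : W.ncard = s.card := by
      rw [hW, Set.ncard_image_of_injOn (fun a _ b _ h => Subtype.ext h), Set.ncard_coe_finset]
    have hdom : IsDomSet T ((D \ W) ∪ ↑U) := by
      intro v hv
      by_cases hvW : v ∈ W
      · obtain ⟨y, hys, hyv⟩ := hvW
        have hys' : y ∈ s := by exact_mod_cast hys
        have hyepn : ¬ (epnSet T D y.1).Nonempty := hs y hys'
        have hempty : epnSet T D y.1 = ∅ := Set.not_nonempty_iff_eq_empty.1 hyepn
        obtain ⟨u, hu⟩ := exists_adj_of_ne hcon y.2.2
        have huD : u ∉ D := fun h => no_adj_of_epn_empty hD hmin y.2.1 hempty u h hu.symm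
        have huU : u ∈ U := Finset.mem_biUnion.2 ⟨y, hys', by
          simp only [t, dif_neg hyepn, Set.mem_toFinset, Set.mem_diff,
            SimpleGraph.mem_neighborSet]
          exact ⟨hu, huD⟩⟩
        refine ⟨u, Or.inr (by exact_mod_cast huU), ?_⟩
        rw [← hyv]
        exact hu.symm
      · have hvD : v ∉ D := fun h => hv (Or.inl ⟨h, hvW⟩)
        obtain ⟨u, hu, hadj⟩ := hD v hvD
        by_cases huW : u ∈ W
        · exfalso
          obtain ⟨y, hys, hyu⟩ := huW
          have hys' : y ∈ s := by exact_mod_cast hys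
          have hyepn : ¬ (epnSet T D y.1).Nonempty := hs y hys'
          have hvU : v ∈ U := Finset.mem_biUnion.2 ⟨y, hys', by
            simp only [t, dif_neg hyepn, Set.mem_toFinset, Set.mem_diff,
              SimpleGraph.mem_neighborSet]
            have hyu' : (y : V) = u := hyu
            exact ⟨by rw [hyu']; exact hadj, hvD⟩⟩
          exact hv (Or.inr (by exact_mod_cast hvU))
        · exact ⟨u, Or.inl ⟨hu, huW⟩, hadj⟩
    have h1 : domNum T ≤ ((D \ W) ∪ ↑U).ncard := domNum_le hdom
    have h2 : ((D \ W) ∪ ↑U).ncard ≤ (D \ W).ncard + (↑U : Set V).ncard :=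
      Set.ncard_union_le _ _
    have h3 : (D \ W).ncard = D.ncard - W.ncard := Set.ncard_diff hWD (Set.toFinite _)
    have h4 : (↑U : Set V).ncard = U.card := Set.ncard_coe_finset U
    have h5 : W.ncard ≤ D.ncard := Set.ncard_le_ncard hWD (Set.toFinite D)
    omega
  have hall : ∀ s : Finset ι, s.card ≤ (s.biUnion t).card := by
    intro s
    set sE := s.filter (fun y => (epnSet T D y.1).Nonempty) with hsE
    set sN := s.filter (fun y => ¬ (epnSet T D y.1).Nonempty) with hsN
    have hcardsplit : sE.card + sN.card = s.card :=
      Finset.card_filter_add_card_filter_not _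
    have hbu : sE.biUnion t ∪ sN.biUnion t ⊆ s.biUnion t := by
      apply Finset.union_subset <;>
        exact Finset.biUnion_subset_biUnion_of_subset_left _ (Finset.filter_subset _ _)
    have hdisj : Disjoint (sE.biUnion t) (sN.biUnion t) := by
      rw [Finset.disjoint_left]
      intro v hvE hvN
      obtain ⟨y, hys, hyt⟩ := Finset.mem_biUnion.1 hvE
      obtain ⟨z, hzs, hzt⟩ := Finset.mem_biUnion.1 hvN
      have hy : (epnSet T D y.1).Nonempty := (Finset.mem_filter.1 hys).2
      have hz : ¬ (epnSet T D z.1).Nonempty := (Finset.mem_filter.1 hzs).2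
      have hv : v ∈ epnSet T D y.1 := by
        simp only [t, dif_pos hy, Finset.mem_singleton] at hyt
        subst hyt; exact hy.choose_spec
      have hadj := ht z v hzt
      have hzy : z.1 ≠ y.1 := fun h => hz (h ▸ hy)
      exact hv.2.2 z.1 z.2.1 hzy hadj.1
    have hE : (sE.biUnion t).card = sE.card := by
      rw [Finset.card_biUnion]
      · have : ∀ y ∈ sE, (t y).card = 1 := by
          intro y hy
          have hye : (epnSet T D y.1).Nonempty := (Finset.mem_filter.1 hy).2
          simp [t, dif_pos hye]
        rw [Finset.sum_congr rfl this, Finset.sum_const, smul_eq_mul, mul_one]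
      · intro y hy z hz hyz
        have hye : (epnSet T D y.1).Nonempty := (Finset.mem_filter.1 hy).2
        have hze : (epnSet T D z.1).Nonempty := (Finset.mem_filter.1 hz).2
        simp only [Function.onFun, t, dif_pos hye, dif_pos hze, Finset.disjoint_singleton]
        intro h
        have h1 := hye.choose_spec
        have h2 := hze.choose_spec
        have hne : z.1 ≠ y.1 := fun hh => hyz (Subtype.ext hh.symm)
        exact h1.2.2 z.1 z.2.1 hne (h ▸ h2.2.1)
    have hN : sN.card ≤ (sN.biUnion t).card :=
      key sN (fun y hy => (Finset.mem_filter.1 hy).2)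
    calc s.card = sE.card + sN.card := hcardsplit.symm
      _ ≤ (sE.biUnion t).card + (sN.biUnion t).card := by omega
      _ = (sE.biUnion t ∪ sN.biUnion t).card := (Finset.card_union_of_disjoint hdisj).symm
      _ ≤ (s.biUnion t).card := Finset.card_le_card hbu
  obtain ⟨f, hfinj, hft⟩ := (Finset.all_card_le_biUnion_card_iff_exists_injective t).1 hall
  refine ⟨fun v => if h : v ∈ D ∧ v ≠ x0 then f ⟨v, h⟩ else v, ?_, ?_⟩
  · intro z hz w hw hzw
    have hz' : z ∈ D ∧ z ≠ x0 := ⟨hz.1, by simpa using hz.2⟩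
    have hw' : w ∈ D ∧ w ≠ x0 := ⟨hw.1, by simpa using hw.2⟩
    simp only [dif_pos hz', dif_pos hw'] at hzw
    exact congrArg Subtype.val (hfinj hzw)
  · intro y hy
    have hy' : y ∈ D ∧ y ≠ x0 := ⟨hy.1, by simpa using hy.2⟩
    simp only [dif_pos hy']
    exact ht _ _ (hft ⟨y, hy'⟩)

lemma bijOn_move {C : Set V} {a r : V} (ha : a ∈ C) (hr : r ∉ C) :
    Set.BijOn (fun v => if v = a then r else v) C (insert r (C \ {a})) := by
  classical
  refine ⟨?_, ?_, ?_⟩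
  · intro v hv
    by_cases h : v = a
    · simp [h]
    · simp only [if_neg h]
      exact Or.inr ⟨hv, h⟩
  · intro v hv w hw h
    simp only at h
    split_ifs at h with h1 h2 h2
    · rw [h1, h2]
    · subst h; exact absurd hw hr
    · subst h; exact absurd hv hr
    · exact h
  · rintro v (rfl | ⟨hv, hva⟩)
    · exact ⟨a, ha, by simp⟩
    · have hva' : v ≠ a := by simpa using hva
      exact ⟨v, hv, by simp [hva']⟩

lemma bijOn_move2 {C : Set V} {a b r : V} (ha : a ∈ C) (hb : b ∈ C) (hab : a ≠ b)
    (hr : r ∉ C) :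
    Set.BijOn (fun v => if v = a then r else if v = b then a else v) C
      (insert r (C \ {b})) := by
  classical
  refine ⟨?_, ?_, ?_⟩
  · intro v hv
    by_cases h1 : v = a
    · simp [h1]
    · by_cases h2 : v = b
      · simp only [if_neg h1, if_pos h2]
        exact Or.inr ⟨ha, hab⟩
      · simp only [if_neg h1, if_neg h2]
        exact Or.inr ⟨hv, h2⟩
  · intro v hv w hw h
    simp only at h
    split_ifs at h <;> subst_vars <;>
      first
        | rfl
        | (exact absurd hv hr)
        | (exact absurd hw hr)
        | (exact absurd ha hr)
        | (exact absurd hb hr)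
        | simp_all
  · rintro v (rfl | ⟨hv, hvb⟩)
    · exact ⟨a, ha, by simp⟩
    · have hvb' : v ≠ b := by simpa using hvb
      by_cases h1 : v = a
      · refine ⟨b, hb, ?_⟩
        simp only [if_neg (Ne.symm hab), if_pos rfl]
        exact h1.symm
      · exact ⟨v, hv, by simp [h1, hvb']⟩

lemma canDefend (hcon : T.Connected) {D : Set V} (hD : IsDomSet T D)
    (hmin : D.ncard = domNum T) {x0 : V} (hx0 : x0 ∈ D)
    (hep : (epnSet T D x0).ncard ≤ 1) :
    CanDefendAllMove T (2 * domNum T - 1) := by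
  classical
  obtain ⟨s0, hs0inj, hs0⟩ := exists_spare hcon hD hmin hx0
  set A : Set V := D \ {x0} with hA
  have hn1 : 1 ≤ D.ncard := (Set.ncard_pos (Set.toFinite D)).2 ⟨x0, hx0⟩
  have hAD : A ⊆ D := Set.diff_subset
  have hAx : x0 ∉ A := fun h => h.2 rfl
  have hAcard : A.ncard = D.ncard - 1 :=
    Set.ncard_diff_singleton_of_mem hx0
  have hinsx0 : insert x0 A = D := Set.insert_diff_singleton.trans (by
    rw [Set.insert_eq_self.2 hx0])
  let Good : (V → V) → Prop := fun s => Set.InjOn s A ∧ ∀ y ∈ A, T.Adj y (s y) ∧ s y ∉ D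
  let F : Set (Set V) := {C | (∃ s, Good s ∧ C = D ∪ s '' A) ∨
    (∃ s p, Good s ∧ p ∈ epnSet T D x0 ∧ (∀ y ∈ A, s y ≠ p) ∧ C = insert p (A ∪ s '' A))}
  have himg : ∀ s, Good s → ∀ v ∈ s '' A, v ∉ D := by
    rintro s hs v ⟨y, hy, rfl⟩
    exact (hs.2 y hy).2
  have hx0img : ∀ s, Good s → x0 ∉ s '' A := fun s hs h => himg s hs x0 h hx0
  have hepn_unique : ∀ p q, p ∈ epnSet T D x0 → q ∈ epnSet T D x0 → p = q :=
    fun p q hp hq => (Set.ncard_le_one (Set.toFinite _)).1 hep p hp q hq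
  -- cardinalities
  have hcardA : ∀ s, Good s → (D ∪ s '' A).ncard = 2 * domNum T - 1 := by
    intro s hs
    have hdisj : Disjoint D (s '' A) := by
      rw [Set.disjoint_right]
      exact fun v hv => himg s hs v hv
    rw [Set.ncard_union_eq hdisj (Set.toFinite _) (Set.toFinite _),
      Set.ncard_image_of_injOn hs.1, hAcard]
    omega
  have hcardB : ∀ s p, Good s → p ∈ epnSet T D x0 → (∀ y ∈ A, s y ≠ p) →
      (insert p (A ∪ s '' A)).ncard = 2 * domNum T - 1 := by
    intro s p hs hp hsp
    have hpA : p ∉ A ∪ s '' A := by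
      rintro (h | ⟨y, hy, rfl⟩)
      · exact hp.1 (hAD h)
      · exact hsp y hy rfl
    have hdisj : Disjoint A (s '' A) := by
      rw [Set.disjoint_right]
      exact fun v hv h => himg s hs v hv (hAD h)
    rw [Set.ncard_insert_of_notMem hpA (Set.toFinite _),
      Set.ncard_union_eq hdisj (Set.toFinite _) (Set.toFinite _),
      Set.ncard_image_of_injOn hs.1, hAcard]
    omega
  -- domination
  have hdomA : ∀ s, Good s → IsDomSet T (D ∪ s '' A) := by
    intro s hs v hv
    have hvD : v ∉ D := fun h => hv (Or.inl h)
    obtain ⟨u, hu, hadj⟩ := hD v hvD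
    exact ⟨u, Or.inl hu, hadj⟩
  have hdomB : ∀ s p, Good s → p ∈ epnSet T D x0 → IsDomSet T (insert p (A ∪ s '' A)) := by
    intro s p hs hp v hv
    by_cases hvx : v = x0
    · exact ⟨p, Or.inl rfl, by rw [hvx]; exact hp.2.1.symm⟩
    · have hvD : v ∉ D := fun h => hv (Or.inr (Or.inl ⟨h, hvx⟩))
      by_cases h2 : ∃ z ∈ A, T.Adj z v
      · obtain ⟨z, hz, hzadj⟩ := h2
        exact ⟨z, Or.inr (Or.inl hz), hzadj⟩
      · obtain ⟨u, hu, hadj⟩ := hD v hvD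
        have hux : u = x0 := by
          by_contra hne
          exact h2 ⟨u, ⟨hu, hne⟩, hadj⟩
        have hvepn : v ∈ epnSet T D x0 := by
          refine ⟨hvD, by rw [← hux]; exact hadj, ?_⟩
          intro z hz hzx hza
          exact h2 ⟨z, ⟨hz, hzx⟩, hza⟩
        have hvp : v = p := hepn_unique v p hvepn hp
        exact absurd (by rw [hvp]; exact Set.mem_insert _ _) hv
  -- update preserves goodness and image identity
  have hupdate : ∀ s y r, Good s → y ∈ A → T.Adj y r → r ∉ D → r ∉ s '' A →
      Good (Function.update s y r) ∧
      (Function.update s y r) '' A = insert r (s '' A \ {s y}) := by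
    intro s y r hs hy hyr hrD hrimg
    have hval : ∀ z, Function.update s y r z = if z = y then r else s z := by
      intro z
      exact Function.update_apply s y r z
    constructor
    · constructor
      · intro z hz w hw h
        rw [hval z, hval w] at h
        split_ifs at h with e1 e2 e2
        · rw [e1, e2]
        · exact absurd ⟨w, hw, h.symm⟩ hrimg
        · exact absurd ⟨z, hz, h⟩ hrimg
        · exact hs.1 hz hw h
      · intro z hz
        rw [hval z]
        split_ifs with e1
        · rw [e1]; exact ⟨hyr, hrD⟩
        · exact hs.2 z hz
    · ext v
      simp only [Set.mem_insert_iff, Set.mem_diff, Set.mem_singleton_iff, Set.mem_image]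
      constructor
      · rintro ⟨z, hz, rfl⟩
        rw [hval z]
        split_ifs with e1
        · exact Or.inl rfl
        · refine Or.inr ⟨⟨z, hz, rfl⟩, ?_⟩
          intro h
          exact e1 (hs.1 hz hy h)
      · rintro (rfl | ⟨⟨z, hz, rfl⟩, hne⟩)
        · exact ⟨y, hy, by rw [hval y, if_pos rfl]⟩
        · have hzy : z ≠ y := fun h => hne (by rw [h])
          exact ⟨z, hz, by rw [hval z, if_neg hzy]⟩
  refine ⟨F, ⟨D ∪ s0 '' A, Or.inl ⟨s0, ⟨hs0inj, hs0⟩, rfl⟩⟩, ?_, ?_⟩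
  · rintro C (⟨s, hs, rfl⟩ | ⟨s, p, hs, hp, hsp, rfl⟩)
    · exact ⟨hdomA s hs, hcardA s hs⟩
    · exact ⟨hdomB s p hs hp, hcardB s p hs hp hsp⟩
  · rintro C (⟨s, hs, rfl⟩ | ⟨s, p, hs, hp, hsp, rfl⟩) r hr
    · -- Type A configuration
      have hrD : r ∉ D := fun h => hr (Or.inl h)
      have hrimg : r ∉ s '' A := fun h => hr (Or.inr h)
      by_cases hex : ∃ y ∈ A, T.Adj y r
      · -- respond within type A
        obtain ⟨y, hy, hyr⟩ := hex
        obtain ⟨hgood', himg'⟩ := hupdate s y r hs hy hyr hrD hrimg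
        have hsyC : s y ∈ D ∪ s '' A := Or.inr ⟨y, hy, rfl⟩
        have hyC : y ∈ D ∪ s '' A := Or.inl (hAD hy)
        have hysy : y ≠ s y := fun h => (hs.2 y hy).2 (h ▸ hAD hy)
        have hid : D ∪ (Function.update s y r) '' A =
            insert r ((D ∪ s '' A) \ {s y}) := by
          rw [himg']
          have hsyD : s y ∉ D := (hs.2 y hy).2
          ext v
          simp only [Set.mem_union, Set.mem_insert_iff, Set.mem_diff, Set.mem_singleton_iff]
          constructor
          · rintro (hv | (rfl | ⟨hv, hne⟩))
            · refine Or.inr ⟨Or.inl hv, ?_⟩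
              intro h
              exact hsyD (h ▸ hv)
            · exact Or.inl rfl
            · exact Or.inr ⟨Or.inr hv, hne⟩
          · rintro (rfl | ⟨(hv | hv), hne⟩)
            · exact Or.inr (Or.inl rfl)
            · exact Or.inl hv
            · exact Or.inr (Or.inr ⟨hv, hne⟩)
        refine ⟨D ∪ (Function.update s y r) '' A, Or.inl ⟨_, hgood', rfl⟩, ?_, ?_⟩
        · exact Or.inr ⟨y, hy, Function.update_self y r s⟩
        · refine ⟨fun v => if v = y then r else if v = s y then y else v, ?_, ?_⟩
          · rw [hid]
            exact bijOn_move2 hyC hsyC hysy hr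
          · intro v hv
            by_cases e1 : v = y
            · subst e1
              right
              simpa using hyr
            · by_cases e2 : v = s y
              · subst e2
                right
                simp only [if_neg e1, if_pos rfl]
                exact (hs.2 y hy).1.symm
              · left
                simp only [if_neg e1, if_neg e2]
      · -- r is the external private neighbor of x0: move x0's guard
        obtain ⟨u, hu, hadj⟩ := hD r hrD
        have hux : u = x0 := by
          by_contra hne
          exact hex ⟨u, ⟨hu, hne⟩, hadj⟩
        have hrepn : r ∈ epnSet T D x0 := by
          refine ⟨hrD, by rw [← hux]; exact hadj, ?_⟩
          intro z hz hzx hza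
          exact hex ⟨z, ⟨hz, hzx⟩, hza⟩
        have hx0C : x0 ∈ D ∪ s '' A := Or.inl hx0
        have hid : insert r (A ∪ s '' A) = insert r ((D ∪ s '' A) \ {x0}) := by
          ext v
          simp only [Set.mem_union, Set.mem_insert_iff, Set.mem_diff, Set.mem_singleton_iff]
          constructor
          · rintro (rfl | hv | hv)
            · exact Or.inl rfl
            · exact Or.inr ⟨Or.inl (hAD hv), hv.2⟩
            · refine Or.inr ⟨Or.inr hv, ?_⟩
              intro h
              exact hx0img s hs (h ▸ hv)
          · rintro (rfl | ⟨(hv | hv), hne⟩)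
            · exact Or.inl rfl
            · exact Or.inr (Or.inl ⟨hv, hne⟩)
            · exact Or.inr (Or.inr hv)
        refine ⟨insert r (A ∪ s '' A),
          Or.inr ⟨s, r, hs, hrepn, fun y hy h => hrimg ⟨y, hy, h⟩, rfl⟩,
          Set.mem_insert _ _, ?_⟩
        refine ⟨fun v => if v = x0 then r else v, ?_, ?_⟩
        · rw [hid]
          exact bijOn_move hx0C hr
        · intro v hv
          by_cases e1 : v = x0
          · subst e1
            right
            simpa using hrepn.2.1
          · left
            simp only [if_neg e1]
    · -- Type B configuration
      have hpA : p ∉ A ∪ s '' A := by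
        rintro (h | ⟨y, hy, rfl⟩)
        · exact hp.1 (hAD h)
        · exact hsp y hy rfl
      by_cases hrx : r = x0
      · -- move the guard on p back to x0
        subst hrx
        have hpC : p ∈ insert p (A ∪ s '' A) := Set.mem_insert _ _
        have hid : D ∪ s '' A = insert r ((insert p (A ∪ s '' A)) \ {p}) := by
          ext v
          simp only [Set.mem_union, Set.mem_insert_iff, Set.mem_diff, Set.mem_singleton_iff]
          constructor
          · rintro (hv | hv)
            · by_cases h : v = r
              · exact Or.inl h
              · refine Or.inr ⟨Or.inr (Or.inl ⟨hv, h⟩), ?_⟩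
                intro hvp
                exact hp.1 (hvp ▸ hv)
            · refine Or.inr ⟨Or.inr (Or.inr hv), ?_⟩
              intro hvp
              exact hpA (Or.inr (hvp ▸ hv))
          · rintro (rfl | ⟨(rfl | hv | hv), hne⟩)
            · exact Or.inl hx0
            · exact absurd rfl hne
            · exact Or.inl (hAD hv)
            · exact Or.inr hv
        refine ⟨D ∪ s '' A, Or.inl ⟨s, hs, rfl⟩, Or.inl hx0, ?_⟩
        refine ⟨fun v => if v = p then r else v, ?_, ?_⟩
        · rw [hid]
          exact bijOn_move hpC hr
        · intro v hv
          by_cases e1 : v = p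
          · subst e1
            right
            simpa using hp.2.1.symm
          · left
            simp only [if_neg e1]
      · have hrD : r ∉ D := by
          intro h
          rcases eq_or_ne r x0 with h' | h'
          · exact hrx h'
          · exact hr (Or.inr (Or.inl ⟨h, h'⟩))
        have hrimg : r ∉ s '' A := fun h => hr (Or.inr (Or.inr h))
        have hrp : r ≠ p := fun h => hr (h ▸ Set.mem_insert _ _)
        by_cases hex : ∃ y ∈ A, T.Adj y r
        · obtain ⟨y, hy, hyr⟩ := hex
          obtain ⟨hgood', himg'⟩ := hupdate s y r hs hy hyr hrD hrimg
          have hsyC : s y ∈ insert p (A ∪ s '' A) := Or.inr (Or.inr ⟨y, hy, rfl⟩)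
          have hyC : y ∈ insert p (A ∪ s '' A) := Or.inr (Or.inl hy)
          have hysy : y ≠ s y := fun h => (hs.2 y hy).2 (h ▸ hAD hy)
          have hsp' : ∀ z ∈ A, Function.update s y r z ≠ p := by
            intro z hz
            rw [Function.update_apply]
            split_ifs with e1
            · exact hrp
            · exact hsp z hz
          have hid : insert p (A ∪ (Function.update s y r) '' A) =
              insert r ((insert p (A ∪ s '' A)) \ {s y}) := by
            rw [himg']
            have hpsy : p ≠ s y := fun h => hsp y hy h.symm
            have hsyA : s y ∉ A := fun h => (hs.2 y hy).2 (hAD h)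
            ext v
            simp only [Set.mem_union, Set.mem_insert_iff, Set.mem_diff, Set.mem_singleton_iff]
            constructor
            · rintro (rfl | hv | (rfl | ⟨hv, hne⟩))
              · exact Or.inr ⟨Or.inl rfl, hpsy⟩
              · refine Or.inr ⟨Or.inr (Or.inl hv), ?_⟩
                intro h
                exact hsyA (h ▸ hv)
              · exact Or.inl rfl
              · exact Or.inr ⟨Or.inr (Or.inr hv), hne⟩
            · rintro (rfl | ⟨(rfl | hv | hv), hne⟩)
              · exact Or.inr (Or.inr (Or.inl rfl))
              · exact Or.inl rfl
              · exact Or.inr (Or.inl hv)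
              · exact Or.inr (Or.inr (Or.inr ⟨hv, hne⟩))
          refine ⟨insert p (A ∪ (Function.update s y r) '' A),
            Or.inr ⟨_, p, hgood', hp, hsp', rfl⟩, ?_, ?_⟩
          · exact Or.inr (Or.inr ⟨y, hy, Function.update_self y r s⟩)
          · refine ⟨fun v => if v = y then r else if v = s y then y else v, ?_, ?_⟩
            · rw [hid]
              exact bijOn_move2 hyC hsyC hysy hr
            · intro v hv
              by_cases e1 : v = y
              · subst e1
                right
                simpa using hyr
              · by_cases e2 : v = s y
                · subst e2
                  right
                  simp only [if_neg e1, if_pos rfl]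
                  exact (hs.2 y hy).1.symm
                · left
                  simp only [if_neg e1, if_neg e2]
        · exfalso
          obtain ⟨u, hu, hadj⟩ := hD r hrD
          have hux : u = x0 := by
            by_contra hne
            exact hex ⟨u, ⟨hu, hne⟩, hadj⟩
          have hrepn : r ∈ epnSet T D x0 := by
            refine ⟨hrD, by rw [← hux]; exact hadj, ?_⟩
            intro z hz hzx hza
            exact hex ⟨z, ⟨hz, hzx⟩, hza⟩
          exact hrp (hepn_unique r p hrepn hp)


end Helpers

open ED in
/-- If `T` is a tree with `γ_m^∞(T) = 2γ(T)` and `D` is a minimum dominating set of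
`T`, then every `x ∈ D` has at least two external private neighbors. -/
theorem stmt_11 {V : Type} [Fintype V] (T : SimpleGraph V) (hT : T.IsTree)
    (h : mEternalDomNum T = 2 * domNum T) (D : Set V)
    (hD : IsDomSet T D) (hmin : D.ncard = domNum T) :
    ∀ x ∈ D, 2 ≤ (epnSet T D x).ncard := by
  intro x hx
  by_contra hlt
  push_neg at hlt
  have hep : (epnSet T D x).ncard ≤ 1 := by omega
  have hcd : CanDefendAllMove T (2 * domNum T - 1) :=
    canDefend hT.isConnected hD hmin hx hep
  have hle : mEternalDomNum T ≤ 2 * domNum T - 1 := Nat.sInf_le hcd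
  have hn1 : 1 ≤ D.ncard := (Set.ncard_pos (Set.toFinite D)).2 ⟨x, hx⟩
  omega
end

section
/- If T is a tree with γ_m^∞(T) = 2γ(T), then no leaf of T belongs to any minimum dominating set of T. -/
open scoped Classical

open ED in
/-- If `T` is a tree with `γ_m^∞(T) = 2γ(T)`, then no leaf of `T` belongs to any
minimum dominating set of `T`. -/
theorem stmt_12 {V : Type} [Fintype V] (T : SimpleGraph V) (hT : T.IsTree)
    (h : mEternalDomNum T = 2 * domNum T) :
    ∀ D : Set V, IsDomSet T D → D.ncard = domNum T → ∀ v ∈ D, ¬ IsLeaf T v := by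
  intro D hdom hcard v hvD hleaf
  classical
  -- the leaf `v` has a unique neighbor `s`
  obtain ⟨s, hs⟩ := Set.ncard_eq_one.mp hleaf
  -- choose an assignment of every vertex to a dominator
  obtain ⟨a, ha⟩ : ∃ a : V → V,
      ∀ w, a w ∈ D ∧ (w ∈ D → a w = w) ∧ (w ∉ D → T.Adj (a w) w) := by
    refine ⟨fun w => if hw : w ∈ D then w else (hdom w hw).choose, fun w => ?_⟩
    by_cases hw : w ∈ D
    · simp [hw]
    · have hspec := (hdom w hw).choose_spec
      beta_reduce
      rw [dif_neg hw]
      exact ⟨hspec.1, fun hc => absurd hc hw, fun _ => hspec.2⟩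
  set Dfin : Finset V := (Set.toFinite D).toFinset with hDfin
  have hmemD : ∀ x, x ∈ Dfin ↔ x ∈ D := fun x => Set.Finite.mem_toFinset _
  set P : V → Finset V := fun u => Finset.univ.filter (fun w => a w = u) with hPdef
  have hPmem : ∀ u w, w ∈ P u ↔ a w = u := by
    intro u w; simp [hPdef]
  have hPself : ∀ u, u ∈ D → u ∈ P u := fun u hu => (hPmem u u).mpr ((ha u).2.1 hu)
  have hPdisj : ∀ u u', u ≠ u' → ∀ w, w ∈ P u → w ∈ P u' → False := by
    intro u u' hne w h1 h2
    exact hne (((hPmem u w).mp h1).symm.trans ((hPmem u' w).mp h2))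
  have hPadj : ∀ u w, w ∈ P u → w ≠ u → T.Adj u w ∧ w ∉ D := by
    intro u w hw hne
    have haw := (hPmem u w).mp hw
    by_cases hwD : w ∈ D
    · exact absurd (((ha w).2.1 hwD).symm.trans haw) hne
    · exact ⟨haw ▸ (ha w).2.2 hwD, hwD⟩
  -- the leaf's part is small
  have hPvcard : (P v).card ≤ 2 := by
    have hsub : P v ⊆ {v, s} := by
      intro w hw
      simp only [Finset.mem_insert, Finset.mem_singleton]
      by_cases hwv : w = v
      · exact Or.inl hwv
      · have hadj := (hPadj v w hw hwv).1
        have hns : w ∈ T.neighborSet v := hadj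
        rw [hs] at hns
        exact Or.inr (by simpa using hns)
    calc (P v).card ≤ ({v, s} : Finset V).card := Finset.card_le_card hsub
      _ ≤ 2 := by
          refine le_trans (Finset.card_insert_le _ _) ?_
          simp
  set big : V → Prop := fun u => 3 ≤ (P u).card with hbig
  set cfg : (V → V) → V → Finset V :=
    fun g u => if big u then {u, g u} else {g u} with hcfg
  set Valid : (V → V) → Prop :=
    fun g => ∀ u ∈ Dfin, g u ∈ P u ∧ (big u → g u ≠ u) with hValid
  set C : (V → V) → Finset V := fun g => Dfin.biUnion (cfg g) with hC
  have hcfgsub : ∀ g, Valid g → ∀ u ∈ Dfin, ∀ x ∈ cfg g u, x ∈ P u := by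
    intro g hg u hu x hx
    have h1 := (hg u hu).1
    by_cases hb : big u
    · simp only [hcfg, if_pos hb, Finset.mem_insert, Finset.mem_singleton] at hx
      rcases hx with rfl | rfl
      · exact hPself x ((hmemD x).mp hu)
      · exact h1
    · simp only [hcfg, if_neg hb, Finset.mem_singleton] at hx
      subst hx; exact h1
  have hcfgcard : ∀ g, Valid g → ∀ u ∈ Dfin, (cfg g u).card = if big u then 2 else 1 := by
    intro g hg u hu
    by_cases hb : big u
    · simp only [hcfg, if_pos hb]
      exact Finset.card_pair (Ne.symm ((hg u hu).2 hb))
    · simp only [hcfg, if_neg hb]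
      exact Finset.card_singleton _
  have hcfgdisj : ∀ g, Valid g → ∀ u ∈ Dfin, ∀ u' ∈ Dfin, u ≠ u' →
      Disjoint (cfg g u) (cfg g u') := by
    intro g hg u hu u' hu' hne
    refine Finset.disjoint_left.mpr fun x hx hx' => ?_
    exact hPdisj u u' hne x (hcfgsub g hg u hu x hx) (hcfgsub g hg u' hu' x hx')
  set k : ℕ := ∑ u ∈ Dfin, if big u then 2 else 1 with hk
  have hCcard : ∀ g, Valid g → (C g).card = k := by
    intro g hg
    rw [hC]
    rw [Finset.card_biUnion (fun u hu u' hu' hne => hcfgdisj g hg u hu u' hu' hne)]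
    exact Finset.sum_congr rfl (fun u hu => hcfgcard g hg u hu)
  have hmemC : ∀ g x, x ∈ C g ↔ ∃ u ∈ Dfin, x ∈ cfg g u := by
    intro g x; rw [hC]; exact Finset.mem_biUnion
  -- domination
  have hCdom : ∀ g, Valid g → IsDomSet T ↑(C g) := by
    intro g hg w hw
    have hwC : w ∉ C g := by simpa using hw
    obtain ⟨u, huw⟩ : ∃ u, a w = u := ⟨_, rfl⟩
    have huD : u ∈ D := huw ▸ (ha w).1
    have huDfin : u ∈ Dfin := (hmemD _).mpr huD
    have hwPu : w ∈ P u := (hPmem _ w).mpr huw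
    by_cases hb : big u
    · have huC : u ∈ C g := (hmemC g _).mpr ⟨u, huDfin, by
        simp only [hcfg, if_pos hb]; exact Finset.mem_insert_self _ _⟩
      have hwu : w ≠ u := fun e => hwC (e ▸ huC)
      exact ⟨u, by simpa using huC, (hPadj _ w hwPu hwu).1⟩
    · have hgC : g u ∈ C g := (hmemC g _).mpr ⟨u, huDfin, by
        simp only [hcfg, if_neg hb]; exact Finset.mem_singleton_self _⟩
      have hgP := (hg _ huDfin).1
      have hwg : w ≠ g u := fun e => hwC (e ▸ hgC)
      have hsmall : (P u).card ≤ 2 := by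
        simp only [hbig] at hb; omega
      have key : u = w ∨ u = g u := by
        by_contra hcon
        push_neg at hcon
        have hsub : ({u, w, g u} : Finset V) ⊆ P u := by
          intro x hx
          simp only [Finset.mem_insert, Finset.mem_singleton] at hx
          rcases hx with rfl | rfl | rfl
          · exact hPself _ huD
          · exact hwPu
          · exact hgP
        have hc3 : ({u, w, g u} : Finset V).card = 3 := by
          rw [Finset.card_insert_of_notMem (by
            simp only [Finset.mem_insert, Finset.mem_singleton]
            push_neg
            exact ⟨hcon.1, hcon.2⟩)]
          rw [Finset.card_pair hwg]
        have := Finset.card_le_card hsub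
        omega
      refine ⟨g u, by simpa using hgC, ?_⟩
      rcases key with rfl | hkey
      · have hgne : g u ≠ u := fun e => hwg e.symm
        exact ((hPadj u (g u) hgP hgne).1).symm
      · have hwu : w ≠ u := fun e => hwg (e.trans hkey)
        have hadj := (hPadj u w hwPu hwu).1
        rw [hkey] at hadj
        exact hadj
  -- closure under attacks
  have hClos : ∀ g, Valid g → ∀ r, r ∉ (↑(C g) : Set V) → ∃ g', Valid g' ∧ r ∈ C g' ∧
      ∃ f : V → V, Set.BijOn f ↑(C g) ↑(C g') ∧
        ∀ x ∈ (↑(C g) : Set V), f x = x ∨ T.Adj x (f x) := by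
    intro g hg r hr
    have hrC : r ∉ C g := by simpa using hr
    obtain ⟨u₀, hu₀w⟩ : ∃ u₀, a r = u₀ := ⟨_, rfl⟩
    have hu₀D : u₀ ∈ D := hu₀w ▸ (ha r).1
    have hu₀fin : u₀ ∈ Dfin := (hmemD _).mpr hu₀D
    have hrP : r ∈ P u₀ := (hPmem _ r).mpr hu₀w
    have hu₀P : u₀ ∈ P u₀ := hPself _ hu₀D
    have hgP : g u₀ ∈ P u₀ := (hg u₀ hu₀fin).1
    have hgCmem : g u₀ ∈ C g := (hmemC g _).mpr ⟨u₀, hu₀fin, by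
      by_cases hb : big u₀
      · simp only [hcfg, if_pos hb]
        exact Finset.mem_insert_of_mem (Finset.mem_singleton_self _)
      · simp only [hcfg, if_neg hb]
        exact Finset.mem_singleton_self _⟩
    have hrg : r ≠ g u₀ := fun e => hrC (e ▸ hgCmem)
    set g' : V → V := Function.update g u₀ r with hg'def
    have hg'eq : ∀ u, u ≠ u₀ → g' u = g u := fun u hu => Function.update_of_ne hu _ _
    have hg'u₀ : g' u₀ = r := Function.update_self _ _ _
    have hrne : big u₀ → r ≠ u₀ := by
      intro hb he
      apply hrC
      refine (hmemC g r).mpr ⟨u₀, hu₀fin, ?_⟩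
      simp only [hcfg, if_pos hb]
      exact he ▸ Finset.mem_insert_self _ _
    have hg' : Valid g' := by
      intro u hu
      by_cases he : u = u₀
      · subst he
        rw [hg'u₀]
        exact ⟨hrP, hrne⟩
      · rw [hg'eq u he]
        exact hg u hu
    have hcfg'eq : ∀ u, u ≠ u₀ → cfg g' u = cfg g u := by
      intro u hu
      simp only [hcfg, hg'eq u hu]
    -- the response function
    set f : V → V := fun x =>
      if big u₀ ∧ x = u₀ then r
      else if x = g u₀ then (if big u₀ then u₀ else r) else x with hf
    have hfix : ∀ x, x ∉ P u₀ → f x = x := by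
      intro x hx
      have h1 : ¬ (big u₀ ∧ x = u₀) := fun hc => hx (hc.2 ▸ hu₀P)
      have h2 : x ≠ g u₀ := fun e => hx (e ▸ hgP)
      simp only [hf, if_neg h1, if_neg h2]
    have hother : ∀ x, x ∈ C g → x ∉ cfg g u₀ → x ∉ P u₀ := by
      intro x hx hx0
      obtain ⟨u, hu, hxu⟩ := (hmemC g x).mp hx
      have hne : u ≠ u₀ := fun e => hx0 (e ▸ hxu)
      exact fun hc => hPdisj u u₀ hne x (hcfgsub g hg u hu x hxu) hc
    have hother' : ∀ x, x ∈ C g' → x ∉ cfg g' u₀ → x ∉ P u₀ := by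
      intro x hx hx0
      obtain ⟨u, hu, hxu⟩ := (hmemC g' x).mp hx
      have hne : u ≠ u₀ := fun e => hx0 (e ▸ hxu)
      exact fun hc => hPdisj u u₀ hne x (hcfgsub g' hg' u hu x hxu) hc
    refine ⟨g', hg', ?_, f, ?_, ?_⟩
    · refine (hmemC g' r).mpr ⟨u₀, hu₀fin, ?_⟩
      by_cases hb : big u₀
      · simp only [hcfg, if_pos hb, hg'u₀]
        exact Finset.mem_insert_of_mem (Finset.mem_singleton_self _)
      · simp only [hcfg, if_neg hb, hg'u₀]
        exact Finset.mem_singleton_self _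
    · -- bijection
      by_cases hb : big u₀
      · -- big part: u₀ ↦ r, g u₀ ↦ u₀, rest fixed
        have hgne : g u₀ ≠ u₀ := (hg u₀ hu₀fin).2 hb
        have hrneu : r ≠ u₀ := hrne hb
        have hfu₀ : f u₀ = r := by simp [hf, hb]
        have hfg : f (g u₀) = u₀ := by simp [hf, hb, hgne]
        have hcfgu₀ : cfg g u₀ = {u₀, g u₀} := by simp [hcfg, hb]
        have hcfg'u₀ : cfg g' u₀ = {u₀, r} := by simp [hcfg, hb, hg'u₀]
        have hu₀Cg : u₀ ∈ C g := (hmemC g _).mpr ⟨u₀, hu₀fin,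
          hcfgu₀ ▸ Finset.mem_insert_self _ _⟩
        have hu₀Cg' : u₀ ∈ C g' := (hmemC g' _).mpr ⟨u₀, hu₀fin,
          hcfg'u₀ ▸ Finset.mem_insert_self _ _⟩
        have hrCg' : r ∈ C g' := (hmemC g' _).mpr ⟨u₀, hu₀fin,
          hcfg'u₀ ▸ Finset.mem_insert_of_mem (Finset.mem_singleton_self _)⟩
        constructor
        · -- MapsTo
          intro x hx
          have hxC : x ∈ C g := by simpa using hx
          by_cases hx0 : x ∈ cfg g u₀
          · rw [hcfgu₀] at hx0
            simp only [Finset.mem_insert, Finset.mem_singleton] at hx0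
            rcases hx0 with h1 | h1
            · rw [h1, hfu₀]; simpa using hrCg'
            · rw [h1, hfg]; simpa using hu₀Cg'
          · have hnp := hother x hxC hx0
            rw [hfix x hnp]
            obtain ⟨u, hu, hxu⟩ := (hmemC g x).mp hxC
            have hne : u ≠ u₀ := fun e => hx0 (e ▸ hxu)
            have : x ∈ C g' := (hmemC g' x).mpr ⟨u, hu, (hcfg'eq u hne) ▸ hxu⟩
            simpa using this
        constructor
        · -- InjOn
          intro x hx y hy hxy
          have hxC : x ∈ C g := by simpa using hx
          have hyC : y ∈ C g := by simpa using hy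
          by_cases hx0 : x ∈ cfg g u₀ <;> by_cases hy0 : y ∈ cfg g u₀
          · rw [hcfgu₀] at hx0 hy0
            simp only [Finset.mem_insert, Finset.mem_singleton] at hx0 hy0
            rcases hx0 with hx1 | hx1 <;> rcases hy0 with hy1 | hy1
            · rw [hx1, hy1]
            · rw [hx1, hfu₀, hy1, hfg] at hxy; exact absurd hxy hrneu
            · rw [hx1, hfg, hy1, hfu₀] at hxy; exact absurd hxy.symm hrneu
            · rw [hx1, hy1]
          · exfalso
            have hynp := hother y hyC hy0
            rw [hfix y hynp] at hxy
            rw [hcfgu₀] at hx0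
            simp only [Finset.mem_insert, Finset.mem_singleton] at hx0
            rcases hx0 with hx1 | hx1
            · rw [hx1, hfu₀] at hxy
              exact hynp (by rw [← hxy]; exact hrP)
            · rw [hx1, hfg] at hxy
              exact hynp (by rw [← hxy]; exact hu₀P)
          · exfalso
            have hxnp := hother x hxC hx0
            rw [hfix x hxnp] at hxy
            rw [hcfgu₀] at hy0
            simp only [Finset.mem_insert, Finset.mem_singleton] at hy0
            rcases hy0 with hy1 | hy1
            · rw [hy1, hfu₀] at hxy
              exact hxnp (by rw [hxy]; exact hrP)
            · rw [hy1, hfg] at hxy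
              exact hxnp (by rw [hxy]; exact hu₀P)
          · rw [hfix x (hother x hxC hx0), hfix y (hother y hyC hy0)] at hxy
            exact hxy
        · -- SurjOn
          intro y hy
          have hyC : y ∈ C g' := by simpa using hy
          by_cases hy0 : y ∈ cfg g' u₀
          · rw [hcfg'u₀] at hy0
            simp only [Finset.mem_insert, Finset.mem_singleton] at hy0
            rcases hy0 with hy1 | hy1
            · exact ⟨g u₀, by simpa using hgCmem, by rw [hfg, hy1]⟩
            · exact ⟨u₀, by simpa using hu₀Cg, by rw [hfu₀, hy1]⟩
          · have hnp := hother' y hyC hy0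
            obtain ⟨u, hu, hyu⟩ := (hmemC g' y).mp hyC
            have hne : u ≠ u₀ := fun e => hy0 (e ▸ hyu)
            have hyCg : y ∈ C g := (hmemC g y).mpr ⟨u, hu, (hcfg'eq u hne) ▸ hyu⟩
            exact ⟨y, by simpa using hyCg, hfix y hnp⟩
      · -- small part: g u₀ ↦ r, rest fixed
        have hfg : f (g u₀) = r := by simp [hf, hb]
        have hcfgu₀ : cfg g u₀ = {g u₀} := by simp [hcfg, hb]
        have hcfg'u₀ : cfg g' u₀ = {r} := by simp [hcfg, hb, hg'u₀]
        have hrCg' : r ∈ C g' := (hmemC g' _).mpr ⟨u₀, hu₀fin,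
          hcfg'u₀ ▸ Finset.mem_singleton_self _⟩
        constructor
        · intro x hx
          have hxC : x ∈ C g := by simpa using hx
          by_cases hx0 : x ∈ cfg g u₀
          · rw [hcfgu₀, Finset.mem_singleton] at hx0
            subst hx0
            rw [hfg]; simpa using hrCg'
          · have hnp := hother x hxC hx0
            rw [hfix x hnp]
            obtain ⟨u, hu, hxu⟩ := (hmemC g x).mp hxC
            have hne : u ≠ u₀ := fun e => hx0 (e ▸ hxu)
            have : x ∈ C g' := (hmemC g' x).mpr ⟨u, hu, (hcfg'eq u hne) ▸ hxu⟩
            simpa using this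
        constructor
        · intro x hx y hy hxy
          have hxC : x ∈ C g := by simpa using hx
          have hyC : y ∈ C g := by simpa using hy
          by_cases hx0 : x ∈ cfg g u₀ <;> by_cases hy0 : y ∈ cfg g u₀
          · rw [hcfgu₀, Finset.mem_singleton] at hx0 hy0
            rw [hx0, hy0]
          · exfalso
            rw [hcfgu₀, Finset.mem_singleton] at hx0
            subst hx0
            have hynp := hother y hyC hy0
            rw [hfix y hynp, hfg] at hxy
            exact hynp (hxy ▸ hrP)
          · exfalso
            rw [hcfgu₀, Finset.mem_singleton] at hy0
            subst hy0
            have hxnp := hother x hxC hx0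
            rw [hfix x hxnp, hfg] at hxy
            exact hxnp (hxy.symm ▸ hrP)
          · rw [hfix x (hother x hxC hx0), hfix y (hother y hyC hy0)] at hxy
            exact hxy
        · intro y hy
          have hyC : y ∈ C g' := by simpa using hy
          by_cases hy0 : y ∈ cfg g' u₀
          · rw [hcfg'u₀, Finset.mem_singleton] at hy0
            exact ⟨g u₀, by simpa using hgCmem, by rw [hfg, hy0]⟩
          · have hnp := hother' y hyC hy0
            obtain ⟨u, hu, hyu⟩ := (hmemC g' y).mp hyC
            have hne : u ≠ u₀ := fun e => hy0 (e ▸ hyu)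
            have hyCg : y ∈ C g := (hmemC g y).mpr ⟨u, hu, (hcfg'eq u hne) ▸ hyu⟩
            exact ⟨y, by simpa using hyCg, hfix y hnp⟩
    · -- moves along edges
      intro x hx
      have hxC : x ∈ C g := by simpa using hx
      by_cases hx0 : x ∈ cfg g u₀
      · by_cases hb : big u₀
        · have hgne : g u₀ ≠ u₀ := (hg u₀ hu₀fin).2 hb
          have hrneu : r ≠ u₀ := hrne hb
          have hcfgu₀ : cfg g u₀ = {u₀, g u₀} := by simp [hcfg, hb]
          rw [hcfgu₀] at hx0
          simp only [Finset.mem_insert, Finset.mem_singleton] at hx0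
          rcases hx0 with h1 | h1
          · right
            have hfx : f x = r := by rw [h1]; simp [hf, hb]
            rw [hfx, h1]
            exact (hPadj u₀ r hrP hrneu).1
          · right
            have hfx : f x = u₀ := by rw [h1]; simp [hf, hb, hgne]
            rw [hfx, h1]
            exact ((hPadj u₀ (g u₀) hgP hgne).1).symm
        · have hcfgu₀ : cfg g u₀ = {g u₀} := by simp [hcfg, hb]
          rw [hcfgu₀, Finset.mem_singleton] at hx0
          subst hx0
          have hfx : f (g u₀) = r := by simp [hf, hb]
          rw [hfx]
          right
          -- adjacency inside a part of size ≤ 2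
          have hsmall : (P u₀).card ≤ 2 := by
            simp only [hbig] at hb; omega
          have key : u₀ = g u₀ ∨ u₀ = r := by
            by_contra hcon
            push_neg at hcon
            have hsub : ({u₀, g u₀, r} : Finset V) ⊆ P u₀ := by
              intro z hz
              simp only [Finset.mem_insert, Finset.mem_singleton] at hz
              rcases hz with rfl | rfl | rfl
              · exact hu₀P
              · exact hgP
              · exact hrP
            have hc3 : ({u₀, g u₀, r} : Finset V).card = 3 := by
              rw [Finset.card_insert_of_notMem (by
                simp only [Finset.mem_insert, Finset.mem_singleton]
                push_neg
                exact ⟨hcon.1, hcon.2⟩)]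
              rw [Finset.card_pair (Ne.symm hrg)]
            have := Finset.card_le_card hsub
            omega
          rcases key with hkey | hkey
          · have hrneu : r ≠ u₀ := by
              intro he
              apply hrC
              refine (hmemC g r).mpr ⟨u₀, hu₀fin, ?_⟩
              simp only [hcfg, if_neg hb, Finset.mem_singleton]
              exact he.trans hkey
            have hadj := (hPadj u₀ r hrP hrneu).1
            rw [hkey] at hadj
            exact hadj
          · have hgneu : g u₀ ≠ u₀ := fun he => hrg (hkey.symm.trans he.symm)
            have hadj : T.Adj (g u₀) u₀ := ((hPadj u₀ (g u₀) hgP hgneu).1).symm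
            convert hadj using 2
            exact hkey.symm
      · left
        exact hfix x (hother x hxC hx0)
  -- an initial valid configuration
  have hex : ∀ u, ∃ x, (u ∈ Dfin → x ∈ P u) ∧ (big u → x ≠ u) := by
    intro u
    by_cases hb : big u
    · have hcard3 : 3 ≤ (P u).card := by simpa [hbig] using hb
      obtain ⟨x, hxP, hxne⟩ :=
        Finset.exists_mem_ne (by omega : 1 < (P u).card) u
      exact ⟨x, fun _ => hxP, fun _ => hxne⟩
    · by_cases hu : u ∈ Dfin
      · exact ⟨u, fun _ => hPself u ((hmemD u).mp hu), fun hb' => absurd hb' hb⟩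
      · exact ⟨u, fun hc => absurd hc hu, fun hb' => absurd hb' hb⟩
  choose g₀ hg₀ using hex
  have hg₀valid : Valid g₀ := fun u hu => ⟨(hg₀ u).1 hu, (hg₀ u).2⟩
  -- assemble the defence family
  have hcan : CanDefendAllMove T k := by
    refine ⟨{E | ∃ g, Valid g ∧ E = ↑(C g)}, ⟨↑(C g₀), g₀, hg₀valid, rfl⟩, ?_, ?_⟩
    · rintro E ⟨g, hg, rfl⟩
      refine ⟨hCdom g hg, ?_⟩
      rw [Set.ncard_coe_finset]
      exact hCcard g hg
    · rintro E ⟨g, hg, rfl⟩ r hr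
      obtain ⟨g', hg', hrg', f, hbij, hmv⟩ := hClos g hg r hr
      exact ⟨↑(C g'), ⟨g', hg', rfl⟩, by simpa using hrg', f, hbij, hmv⟩
  have hle : mEternalDomNum T ≤ k := Nat.sInf_le hcan
  -- k < 2 * domNum T
  have hDcard : Dfin.card = domNum T := by
    rw [hDfin, ← Set.ncard_eq_toFinset_card D (Set.toFinite D)]
    exact hcard
  have hvfin : v ∈ Dfin := (hmemD v).mpr hvD
  have hklt : k < 2 * domNum T := by
    have hlt : k < ∑ _u ∈ Dfin, 2 := by
      rw [hk]
      apply Finset.sum_lt_sum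
      · intro i _; split <;> omega
      · refine ⟨v, hvfin, ?_⟩
        have hnb : ¬ big v := by simp only [hbig]; omega
        simp [hnb]
    have hsum : ∑ _u ∈ Dfin, 2 = 2 * domNum T := by
      rw [Finset.sum_const, hDcard]; ring
    omega
  omega
end

section
/- Let T be a tree with γ_m^∞(T) = 2γ(T). Then every dominating set partition of T with respect to a minimum dominating set D is fat, i.e., each part has at least three vertices. -/
open scoped Classical

namespace ED

variable {V : Type}

/-- `S` induces in `G` a star centered at `c`. -/
def IsStarOn (G : SimpleGraph V) (S : Set V) (c : V) : Prop :=
  c ∈ S ∧ (∀ v ∈ S, v ≠ c → G.Adj c v) ∧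
    ∀ u ∈ S, ∀ v ∈ S, G.Adj u v → u = c ∨ v = c

/-- A dominating set partition of `G` with respect to a minimum dominating set `D`:
a neo-colonization with `γ(G)` parts, each inducing a star centered at a vertex
of `D`. -/
def IsDomSetPartition (G : SimpleGraph V) (D : Set V) (P : Finset (Set V)) : Prop :=
  IsNeoColonization G P ∧ P.card = domNum G ∧
    ∀ S ∈ P, ∃ c ∈ D, IsStarOn G S c

end ED

namespace ED
variable {V : Type}

lemma ncard_biUnion [Fintype V] (P : Finset (Set V)) (f : Set V → Set V)
    (hd : ∀ S ∈ P, ∀ S' ∈ P, S ≠ S' → Disjoint (f S) (f S')) :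
    (⋃ S ∈ P, f S).ncard = ∑ S ∈ P, (f S).ncard := by
  classical
  induction P using Finset.induction_on with
  | empty => simp
  | @insert a Q ha ih =>
    rw [Finset.set_biUnion_insert, Finset.sum_insert ha,
      Set.ncard_union_eq ?_ (Set.toFinite _) (Set.toFinite _),
      ih (fun S hS S' hS' hne => hd S (Finset.mem_insert_of_mem hS) S' (Finset.mem_insert_of_mem hS') hne)]
    rw [Set.disjoint_iUnion₂_right]
    intro S hS
    exact hd a (Finset.mem_insert_self a Q) S (Finset.mem_insert_of_mem hS)
      (fun h => ha (h ▸ hS))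

lemma canDefend [Fintype V] (G : SimpleGraph V) (P : Finset (Set V))
    (huniq : ∀ v : V, ∃! S, S ∈ P ∧ v ∈ S)
    (c : Set V → V) (hc : ∀ S ∈ P, IsStarOn G S (c S)) :
    CanDefendAllMove G (∑ S ∈ P, if 3 ≤ S.ncard then 2 else 1) := by
  classical
  -- parts are pairwise disjoint
  have hdisj : ∀ S ∈ P, ∀ S' ∈ P, ∀ x, x ∈ S → x ∈ S' → S = S' := by
    intro S hS S' hS' x hx hx'
    obtain ⟨U, -, hU⟩ := huniq x
    rw [hU S ⟨hS, hx⟩, hU S' ⟨hS', hx'⟩]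
  set guards : (Set V → V) → Set V → Set V :=
    fun g S => if 3 ≤ S.ncard then {c S, g S} else {g S} with hguards
  set Good : (Set V → V) → Prop :=
    fun g => ∀ S ∈ P, g S ∈ S ∧ (3 ≤ S.ncard → g S ≠ c S) with hGood
  set conf : (Set V → V) → Set V := fun g => ⋃ S ∈ P, guards g S with hconf
  have hgsub : ∀ g S, S ∈ P → guards g S ⊆ S → True := fun _ _ _ _ => trivial
  have hsub : ∀ g, Good g → ∀ S ∈ P, guards g S ⊆ S := by
    intro g hg S hS x hx
    simp only [hguards] at hx
    split_ifs at hx with hbig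
    · rcases hx with rfl | rfl
      · exact (hc S hS).1
      · exact (hg S hS).1
    · rcases hx with rfl
      exact (hg S hS).1
  have hmemconf : ∀ g x, x ∈ conf g ↔ ∃ S ∈ P, x ∈ guards g S := by
    intro g x; simp [hconf]
  -- in which part a guard lies
  have hgdisj : ∀ g, Good g → ∀ S ∈ P, ∀ S' ∈ P, S ≠ S' →
      Disjoint (guards g S) (guards g S') := by
    intro g hg S hS S' hS' hne
    rw [Set.disjoint_left]
    intro x hx hx'
    exact hne (hdisj S hS S' hS' x (hsub g hg S hS hx) (hsub g hg S' hS' hx'))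
  have hncard : ∀ g, Good g → (conf g).ncard = ∑ S ∈ P, if 3 ≤ S.ncard then 2 else 1 := by
    intro g hg
    rw [hconf]
    rw [ncard_biUnion P _ (hgdisj g hg)]
    refine Finset.sum_congr rfl fun S hS => ?_
    simp only [hguards]
    split_ifs with hbig
    · exact Set.ncard_pair (Ne.symm ((hg S hS).2 hbig))
    · exact Set.ncard_singleton _
  have hdom : ∀ g, Good g → IsDomSet G (conf g) := by
    intro g hg v hv
    obtain ⟨S, ⟨hS, hvS⟩, -⟩ := huniq v
    by_cases hbig : 3 ≤ S.ncard
    · refine ⟨c S, (hmemconf g _).2 ⟨S, hS, by simp [hguards, hbig]⟩, ?_⟩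
      refine (hc S hS).2.1 v hvS ?_
      rintro rfl
      exact hv ((hmemconf g _).2 ⟨S, hS, by simp [hguards, hbig]⟩)
    · have hgS : g S ∈ conf g := (hmemconf g _).2 ⟨S, hS, by simp [hguards, hbig]⟩
      refine ⟨g S, hgS, ?_⟩
      have hvne : v ≠ g S := fun h => hv (h ▸ hgS)
      -- one of v, g S is the center, since S has fewer than 3 vertices
      by_cases hvc : v = c S
      · subst hvc
        exact ((hc S hS).2.1 (g S) (hg S hS).1 (Ne.symm hvne)).symm
      by_cases hgc : g S = c S
      · rw [hgc]; exact ((hc S hS).2.1 v hvS hvc)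
      · exfalso
        apply hbig
        have hsub3 : ({v, g S, c S} : Set V) ⊆ S :=
          Set.insert_subset hvS (Set.insert_subset (hg S hS).1
            (Set.singleton_subset_iff.2 (hc S hS).1))
        have : ({v, g S, c S} : Set V).ncard = 3 := by
          rw [Set.ncard_insert_of_notMem (by simp [hvne, hvc]) (Set.toFinite _),
            Set.ncard_pair hgc]
        rw [← this]
        exact Set.ncard_le_ncard hsub3 (Set.toFinite S)
  -- default good function
  set g0 : Set V → V := fun S => if h : ∃ x ∈ S, x ≠ c S then h.choose else c S with hg0
  have hg0good : Good g0 := by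
    intro S hS
    simp only [hg0]
    split_ifs with hx
    · exact ⟨hx.choose_spec.1, fun _ => hx.choose_spec.2⟩
    · refine ⟨(hc S hS).1, fun hbig => absurd ?_ hx⟩
      obtain ⟨x, hxS, hxc⟩ : ∃ x ∈ S, x ≠ c S := by
        have h1 : ({c S} : Set V).ncard < S.ncard := by
          rw [Set.ncard_singleton]; omega
        obtain ⟨x, hxS, hxc⟩ := Set.exists_mem_notMem_of_ncard_lt_ncard h1
        exact ⟨x, hxS, by simpa using hxc⟩
      exact ⟨x, hxS, hxc⟩
  refine ⟨{C | ∃ g, Good g ∧ C = conf g}, ⟨conf g0, g0, hg0good, rfl⟩, ?_, ?_⟩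
  · rintro C ⟨g, hg, rfl⟩
    exact ⟨hdom g hg, hncard g hg⟩
  · rintro C ⟨g, hg, rfl⟩ r hr
    obtain ⟨Sr, ⟨hSr, hrS⟩, -⟩ := huniq r
    set g' : Set V → V := fun S => if S = Sr then r else g S with hg'
    have hrnc : 3 ≤ Sr.ncard → r ≠ c Sr := by
      intro hbig hrc
      exact hr ((hmemconf g _).2 ⟨Sr, hSr, by simp [hguards, hbig, hrc]⟩)
    have hg'good : Good g' := by
      intro S hS
      simp only [hg']
      split_ifs with hSS
      · subst hSS; exact ⟨hrS, hrnc⟩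
      · exact hg S hS
    have hrconf : r ∈ conf g' := by
      refine (hmemconf g' _).2 ⟨Sr, hSr, ?_⟩
      simp only [hguards, hg']
      split_ifs <;> simp
    -- the guard of part Sr currently
    have hxS : g Sr ∈ Sr := (hg Sr hSr).1
    have hxconf : g Sr ∈ conf g := by
      refine (hmemconf g _).2 ⟨Sr, hSr, ?_⟩
      simp only [hguards]; split_ifs <;> simp
    have hrx : r ≠ g Sr := fun h => hr (h ▸ hxconf)
    -- other parts' guards are untouched and avoid Sr
    have hother : ∀ S ∈ P, S ≠ Sr → ∀ x ∈ guards g S, x ∉ Sr := by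
      intro S hS hne x hx hxSr
      exact hne (hdisj S hS Sr hSr x (hsub g hg S hS hx) hxSr)
    by_cases hbig : 3 ≤ Sr.ncard
    · -- two guards: center stays pattern: g Sr ↦ c Sr, c Sr ↦ r
      set f : V → V := fun v => if v = g Sr then c Sr else if v = c Sr then r else v with hf
      have hcconf : c Sr ∈ conf g := (hmemconf g _).2 ⟨Sr, hSr, by simp [hguards, hbig]⟩
      have hrc : r ≠ c Sr := hrnc hbig
      have hgc : g Sr ≠ c Sr := (hg Sr hSr).2 hbig
      refine ⟨conf g', ⟨g', hg'good, rfl⟩, hrconf, f, ?_, ?_⟩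
      · -- BijOn
        have hfval : ∀ v, v ≠ g Sr → v ≠ c Sr → f v = v := by
          intro v h1 h2; simp only [hf, if_neg h1, if_neg h2]
        have hfx : f (g Sr) = c Sr := by simp only [hf, if_pos rfl]
        have hfc : f (c Sr) = r := by simp only [hf, if_neg (Ne.symm hgc)]; simp
        have hinj : Set.InjOn f (conf g) := by
          intro a ha b hb hab
          have hra : a ≠ r := fun h => hr (h ▸ ha)
          have hrb : b ≠ r := fun h => hr (h ▸ hb)
          by_cases ha1 : a = g Sr <;> by_cases hb1 : b = g Sr
          · rw [ha1, hb1]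
          · exfalso
            by_cases hb2 : b = c Sr
            · rw [ha1, hb2, hfx, hfc] at hab; exact hrc hab.symm
            · rw [ha1, hfx, hfval b hb1 hb2] at hab; exact hb2 hab.symm
          · exfalso
            by_cases ha2 : a = c Sr
            · rw [hb1, ha2, hfx, hfc] at hab; exact hrc hab
            · rw [hb1, hfx, hfval a ha1 ha2] at hab; exact ha2 hab
          · by_cases ha2 : a = c Sr <;> by_cases hb2 : b = c Sr
            · rw [ha2, hb2]
            · exfalso; rw [ha2, hfc, hfval b hb1 hb2] at hab; exact hrb hab.symm
            · exfalso; rw [hb2, hfc, hfval a ha1 ha2] at hab; exact hra hab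
            · rwa [hfval a ha1 ha2, hfval b hb1 hb2] at hab
        have himg : f '' conf g = conf g' := by
          rw [hconf, Set.image_iUnion₂]
          refine Set.iUnion₂_congr fun S hS => ?_
          by_cases hSS : S = Sr
          · subst hSS
            simp only [hguards, hg', if_pos hbig]
            rw [Set.image_pair, hfc, hfx, Set.pair_comm]
            simp
          · have : ∀ x ∈ guards g S, f x = x := by
              intro x hx
              have hx1 : x ∉ Sr := hother S hS hSS x hx
              have h1 : x ≠ g Sr := fun h => hx1 (h ▸ hxS)
              have h2 : x ≠ c Sr := fun h => hx1 (h ▸ (hc Sr hSr).1)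
              exact hfval x h1 h2
            rw [Set.image_congr this, Set.image_id']
            simp only [hguards, hg', if_neg hSS]
        exact himg ▸ hinj.bijOn_image
      · intro v hv
        simp only [hf]
        split_ifs with h1 h2
        · subst h1
          exact Or.inr (((hc Sr hSr).2.1 (g Sr) hxS hgc).symm)
        · subst h2
          exact Or.inr ((hc Sr hSr).2.1 r hrS hrc)
        · exact Or.inl rfl
    · -- one guard: g Sr ↦ r
      set f : V → V := fun v => if v = g Sr then r else v with hf
      refine ⟨conf g', ⟨g', hg'good, rfl⟩, hrconf, f, ?_, ?_⟩
      · have hfval : ∀ v, v ≠ g Sr → f v = v := by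
          intro v h1; simp only [hf, if_neg h1]
        have hfx : f (g Sr) = r := by simp only [hf, if_pos rfl]
        have hinj : Set.InjOn f (conf g) := by
          intro a ha b hb hab
          have hra : a ≠ r := fun h => hr (h ▸ ha)
          have hrb : b ≠ r := fun h => hr (h ▸ hb)
          by_cases ha1 : a = g Sr <;> by_cases hb1 : b = g Sr
          · rw [ha1, hb1]
          · exfalso; rw [ha1, hfx, hfval b hb1] at hab; exact hrb hab.symm
          · exfalso; rw [hb1, hfx, hfval a ha1] at hab; exact hra hab
          · rwa [hfval a ha1, hfval b hb1] at hab
        have himg : f '' conf g = conf g' := by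
          rw [hconf, Set.image_iUnion₂]
          refine Set.iUnion₂_congr fun S hS => ?_
          by_cases hSS : S = Sr
          · subst hSS
            simp only [hguards, hg', if_neg hbig]
            rw [Set.image_singleton, hfx]
            simp
          · have : ∀ x ∈ guards g S, f x = x := by
              intro x hx
              have hx1 : x ∉ Sr := hother S hS hSS x hx
              exact hfval x (fun h => hx1 (h ▸ hxS))
            rw [Set.image_congr this, Set.image_id']
            simp only [hguards, hg', if_neg hSS]
        exact himg ▸ hinj.bijOn_image
      · intro v hv
        simp only [hf]
        split_ifs with h1
        · subst h1
          refine Or.inr ?_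
          -- g Sr and r both in small star Sr, distinct, so adjacent
          by_cases hvc : g Sr = c Sr
          · rw [hvc]; exact (hc Sr hSr).2.1 r hrS (fun h => hrx (h ▸ hvc ▸ rfl) )
          by_cases hrc : r = c Sr
          · rw [hrc] at *
            exact ((hc Sr hSr).2.1 (g Sr) hxS hvc).symm
          · exfalso
            apply hbig
            have hsub3 : ({r, g Sr, c Sr} : Set V) ⊆ Sr :=
              Set.insert_subset hrS (Set.insert_subset hxS
                (Set.singleton_subset_iff.2 (hc Sr hSr).1))
            have h3 : ({r, g Sr, c Sr} : Set V).ncard = 3 := by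
              rw [Set.ncard_insert_of_notMem (by simp [hrx, hrc]) (Set.toFinite _),
                Set.ncard_pair hvc]
            rw [← h3]
            exact Set.ncard_le_ncard hsub3 (Set.toFinite Sr)
        · exact Or.inl rfl

end ED

open ED in
/-- If `T` is a tree with `γ_m^∞(T) = 2γ(T)`, then every dominating set partition of
`T` with respect to a minimum dominating set `D` is fat: each part has at least
three vertices. -/
theorem stmt_14 {V : Type} [Fintype V] (T : SimpleGraph V) (hT : T.IsTree)
    (h : mEternalDomNum T = 2 * domNum T) (D : Set V)
    (hD : IsDomSet T D) (hmin : D.ncard = domNum T)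
    (P : Finset (Set V)) (hP : IsDomSetPartition T D P) :
    ∀ S ∈ P, 3 ≤ S.ncard := by
  by_contra hcon
  push_neg at hcon
  obtain ⟨S₀, hS₀P, hS₀⟩ := hcon
  obtain ⟨hneo, hcard, hstar⟩ := hP
  have hne : Nonempty V := by
    have h1 : Nonempty ↥S₀ := (hneo.1 S₀ hS₀P).nonempty
    exact ⟨h1.some.1⟩
  choose! c hcD hcstar using hstar
  have hdef := canDefend T P hneo.2 c hcstar
  have hk : (∑ S ∈ P, if 3 ≤ S.ncard then 2 else 1) < 2 * domNum T := by
    rw [← hcard]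
    calc (∑ S ∈ P, if 3 ≤ S.ncard then 2 else 1) < ∑ _S ∈ P, 2 :=
        Finset.sum_lt_sum (fun i _ => by split <;> omega)
          ⟨S₀, hS₀P, by rw [if_neg (by omega)]; omega⟩
      _ = 2 * P.card := by rw [Finset.sum_const, smul_eq_mul, mul_comm]
  have hle : mEternalDomNum T ≤ ∑ S ∈ P, if 3 ≤ S.ncard then 2 else 1 :=
    Nat.sInf_le hdef
  omega
end
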